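/- arXiv:0809.0360 — 3 statements merged into one kernel-verified Lean document; each statement's English description precedes it below -/
import Mathlib

section
/- If a sentence of the full graded μ-calculus is satisfiable, then it has a tree model. -/
/-! ### Syntax and semantics of the fully enriched μ-calculus -/

/-- Programs: atomic programs and their inverses. -/
inductive Prg (Pr : Type) where
  | atom (a : Pr)
  | inv (a : Pr)

/-- Formulas of the fully enriched μ-calculus in positive normal form,
over atomic propositions `P`, nominals `N`, variables `V` and atomic programs `Pr`. -/
inductive Fml (P N V Pr : Type) where
  | tt
  | ff
  | prop (p : P)
  | nprop (p : P)
  | nom (o : N)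
  | nnom (o : N)
  | var (x : V)
  | or (φ ψ : Fml P N V Pr)
  | and (φ ψ : Fml P N V Pr)
  | atleast (n : ℕ) (α : Prg Pr) (φ : Fml P N V Pr)
  | allbut (n : ℕ) (α : Prg Pr) (φ : Fml P N V Pr)
  | mu (y : V) (φ : Fml P N V Pr)
  | nu (y : V) (φ : Fml P N V Pr)

namespace Fml

variable {P N V Pr : Type}

/-- Free variables of a formula. -/
def free : Fml P N V Pr → Set V
  | .var x => {x}
  | .or φ ψ => φ.free ∪ ψ.free
  | .and φ ψ => φ.free ∪ ψ.free
  | .atleast _ _ φ => φ.free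
  | .allbut _ _ φ => φ.free
  | .mu y φ => φ.free \ {y}
  | .nu y φ => φ.free \ {y}
  | _ => ∅

/-- A sentence is a formula without free variables. -/
def IsSentence (φ : Fml P N V Pr) : Prop := φ.free = ∅

/-- The formula contains no nominals (full graded μ-calculus). -/
def NoNom : Fml P N V Pr → Prop
  | .nom _ => False
  | .nnom _ => False
  | .or φ ψ => φ.NoNom ∧ ψ.NoNom
  | .and φ ψ => φ.NoNom ∧ ψ.NoNom
  | .atleast _ _ φ => φ.NoNom
  | .allbut _ _ φ => φ.NoNom
  | .mu _ φ => φ.NoNom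
  | .nu _ φ => φ.NoNom
  | _ => True

/-- A program is atomic (not an inverse program). -/
def _root_.Prg.IsAtom : Prg Pr → Prop
  | .atom _ => True
  | .inv _ => False

/-- The formula contains no inverse programs (hybrid graded μ-calculus). -/
def NoInv : Fml P N V Pr → Prop
  | .or φ ψ => φ.NoInv ∧ ψ.NoInv
  | .and φ ψ => φ.NoInv ∧ ψ.NoInv
  | .atleast _ α φ => α.IsAtom ∧ φ.NoInv
  | .allbut _ α φ => α.IsAtom ∧ φ.NoInv
  | .mu _ φ => φ.NoInv
  | .nu _ φ => φ.NoInv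
  | _ => True

/-- Atomic propositions occurring in a formula. -/
def props : Fml P N V Pr → Set P
  | .prop p => {p}
  | .nprop p => {p}
  | .or φ ψ => φ.props ∪ ψ.props
  | .and φ ψ => φ.props ∪ ψ.props
  | .atleast _ _ φ => φ.props
  | .allbut _ _ φ => φ.props
  | .mu _ φ => φ.props
  | .nu _ φ => φ.props
  | _ => ∅

/-- Nominals occurring in a formula. -/
def noms : Fml P N V Pr → Set N
  | .nom o => {o}
  | .nnom o => {o}
  | .or φ ψ => φ.noms ∪ ψ.noms
  | .and φ ψ => φ.noms ∪ ψ.noms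
  | .atleast _ _ φ => φ.noms
  | .allbut _ _ φ => φ.noms
  | .mu _ φ => φ.noms
  | .nu _ φ => φ.noms
  | _ => ∅

/-- Programs occurring in a formula. -/
def prgs : Fml P N V Pr → Set (Prg Pr)
  | .or φ ψ => φ.prgs ∪ ψ.prgs
  | .and φ ψ => φ.prgs ∪ ψ.prgs
  | .atleast _ α φ => insert α φ.prgs
  | .allbut _ α φ => insert α φ.prgs
  | .mu _ φ => φ.prgs
  | .nu _ φ => φ.prgs
  | _ => ∅

end Fml

/-- `CardGT s n`: the set `s` has more than `n` elements. -/
def CardGT {α : Type*} (s : Set α) (n : ℕ) : Prop :=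
  ∃ t : Finset α, ↑t ⊆ s ∧ n < t.card

/-- `CardLE s n`: the set `s` has at most `n` elements. -/
def CardLE {α : Type*} (s : Set α) (n : ℕ) : Prop :=
  ∃ t : Finset α, s ⊆ ↑t ∧ t.card ≤ n

/-- A Kripke structure over a nonempty state set `W`, with accessibility relations for
atomic programs, an interpretation of atomic propositions, and (singleton-valued)
interpretation of nominals given by the designated state `nomVal o`. -/
structure Kripke (P N Pr W : Type) where
  ne : Nonempty W
  R : Pr → W → W → Prop
  L : P → Set W
  nomVal : N → W

namespace Kripke

variable {P N V Pr W : Type}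

/-- Extension of the accessibility relations to programs, with `R(a⁻) = R(a)⁻¹`. -/
def rel (K : Kripke P N Pr W) : Prg Pr → W → W → Prop
  | .atom a => K.R a
  | .inv a => fun w v => K.R a v w

open Classical in
/-- The semantics `φ^K(𝓥)` of a formula relative to a valuation of its free variables. -/
noncomputable def sat (K : Kripke P N Pr W) : Fml P N V Pr → (V → Set W) → Set W
  | .tt, _ => Set.univ
  | .ff, _ => ∅
  | .prop p, _ => K.L p
  | .nprop p, _ => (K.L p)ᶜ
  | .nom o, _ => {K.nomVal o}
  | .nnom o, _ => {K.nomVal o}ᶜ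
  | .var x, 𝓥 => 𝓥 x
  | .or φ ψ, 𝓥 => K.sat φ 𝓥 ∪ K.sat ψ 𝓥
  | .and φ ψ, 𝓥 => K.sat φ 𝓥 ∩ K.sat ψ 𝓥
  | .atleast n α φ, 𝓥 => {w | CardGT {u | K.rel α w u ∧ u ∈ K.sat φ 𝓥} n}
  | .allbut n α φ, 𝓥 => {w | CardLE {u | K.rel α w u ∧ u ∉ K.sat φ 𝓥} n}
  | .mu y φ, 𝓥 => ⋂₀ {S : Set W | K.sat φ (fun z => if z = y then S else 𝓥 z) ⊆ S}
  | .nu y φ, 𝓥 => ⋃₀ {S : Set W | S ⊆ K.sat φ (fun z => if z = y then S else 𝓥 z)}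

end Kripke

/-- `K, w ⊨ φ` for a sentence `φ`: `w ∈ φ^K(∅)`. -/
def Models {P N V Pr W : Type} (K : Kripke P N Pr W) (w : W) (φ : Fml P N V Pr) : Prop :=
  w ∈ K.sat φ (fun _ => ∅)

/-- A sentence is satisfiable if it holds at some state of some Kripke structure. -/
def Satisfiable {P N V Pr : Type} (φ : Fml P N V Pr) : Prop :=
  ∃ (W : Type) (K : Kripke P N Pr W) (w : W), Models K w φ
/-! ### Forests and trees of nodes (nonempty finite words over ℕ) -/

/-- Nodes of forests: finite words over ℕ (the forest condition requires nonemptiness). -/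
abbrev Node := List ℕ

/-- `y` is a child (successor) of `x`: `y = x·c` for some `c ∈ ℕ`. -/
def IsChild (x y : Node) : Prop := ∃ c : ℕ, y = x ++ [c]

/-- A forest: a set of nonempty words over ℕ closed under nonempty prefixes. -/
def IsForest (F : Set Node) : Prop :=
  (∀ x ∈ F, x ≠ []) ∧ (∀ x y : Node, y ∈ F → IsChild x y → x ≠ [] → x ∈ F)

/-- The roots of a forest are its length-one elements. -/
def IsRootNode (x : Node) : Prop := x.length = 1

/-- A tree: a nonempty forest all of whose elements start with the same letter. -/
def IsTree (T : Set Node) : Prop :=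
  IsForest T ∧ T.Nonempty ∧ ∃ c : ℕ, ∀ x ∈ T, x.head? = some c
/-! ### Tree, forest and quasi-forest structures -/

section Structures

variable {P N Pr : Type}

/-- A forest structure: the state set is a forest and the union of all program relations
(including inverses) is exactly the parent–child/child–parent adjacency. -/
def IsForestStructure (F : Set Node) (K : Kripke P N Pr {x : Node // x ∈ F}) : Prop :=
  IsForest F ∧
  ∀ x y : {x : Node // x ∈ F},
    (∃ α : Prg Pr, K.rel α x y) ↔ (IsChild x.val y.val ∨ IsChild y.val x.val)

/-- A tree structure: the state set is a tree and the union of all program relations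
(including inverses) is exactly the parent–child/child–parent adjacency. -/
def IsTreeStructure (T : Set Node) (K : Kripke P N Pr {x : Node // x ∈ T}) : Prop :=
  IsTree T ∧
  ∀ x y : {x : Node // x ∈ T},
    (∃ α : Prg Pr, K.rel α x y) ↔ (IsChild x.val y.val ∨ IsChild y.val x.val)

/-- A directed forest structure: a forest structure in which every `R(a)`-edge
(`a` atomic) goes from a node to one of its successors. -/
def IsDirectedForestStructure (F : Set Node) (K : Kripke P N Pr {x : Node // x ∈ F}) : Prop :=
  IsForestStructure F K ∧
  ∀ (a : Pr) (x y : {x : Node // x ∈ F}), K.R a x y → IsChild x.val y.val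

/-- The structure obtained by deleting all edges entering a root. -/
def delRootEdges (F : Set Node) (K : Kripke P N Pr {x : Node // x ∈ F}) :
    Kripke P N Pr {x : Node // x ∈ F} :=
  { K with R := fun a x y => K.R a x y ∧ ¬ IsRootNode y.val }

/-- A directed quasi-forest structure: deleting all edges entering a root
yields a directed forest structure. -/
def IsDirectedQuasiForestStructure (F : Set Node)
    (K : Kripke P N Pr {x : Node // x ∈ F}) : Prop :=
  IsDirectedForestStructure F (delRootEdges F K)

end Structures
/-! ### Auxiliary development for the proof -/

section AuxBasics

open Classical

variable {P N V Pr W : Type}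

theorem CardGT.mono {α : Type*} {s t : Set α} {n : ℕ} (hst : s ⊆ t) (h : CardGT s n) :
    CardGT t n := by
  obtain ⟨u, hu, hc⟩ := h
  exact ⟨u, hu.trans hst, hc⟩

theorem CardLE.mono {α : Type*} {s t : Set α} {n : ℕ} (hst : s ⊆ t) (h : CardLE t n) :
    CardLE s n := by
  obtain ⟨u, hu, hc⟩ := h
  exact ⟨u, hst.trans hu, hc⟩

theorem not_cardLE_iff_cardGT {α : Type*} {s : Set α} {n : ℕ} :
    ¬ CardLE s n ↔ CardGT s n := by
  constructor
  · intro h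
    by_cases hfin : s.Finite
    · refine ⟨hfin.toFinset, by simp, ?_⟩
      by_contra hle
      exact h ⟨hfin.toFinset, by simp, Nat.le_of_not_lt hle⟩
    · obtain ⟨t, hts, hcard⟩ := Set.Infinite.exists_subset_card_eq hfin (n+1)
      exact ⟨t, hts, by omega⟩
  · rintro ⟨t, hts, hcard⟩ ⟨u, hsu, hcu⟩
    have : t ⊆ u := fun x hx => hsu (hts hx)
    have := Finset.card_le_card this
    omega

theorem sat_mono (K : Kripke P N Pr W) (φ : Fml P N V Pr) :
    ∀ {𝓥 𝓥' : V → Set W}, (∀ x, 𝓥 x ⊆ 𝓥' x) → K.sat φ 𝓥 ⊆ K.sat φ 𝓥' := by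
  induction φ with
  | tt => intro _ _ _; simp [Kripke.sat]
  | ff => intro _ _ _; simp [Kripke.sat]
  | prop p => intro _ _ _; simp [Kripke.sat]
  | nprop p => intro _ _ _; simp [Kripke.sat]
  | nom o => intro _ _ _; simp [Kripke.sat]
  | nnom o => intro _ _ _; simp [Kripke.sat]
  | var x => intro _ _ h; exact h x
  | or φ ψ ihφ ihψ =>
    intro _ _ h
    exact Set.union_subset_union (ihφ h) (ihψ h)
  | and φ ψ ihφ ihψ =>
    intro _ _ h
    exact Set.inter_subset_inter (ihφ h) (ihψ h)
  | atleast n α φ ih =>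
    intro 𝓥 𝓥' h u hu
    simp only [Kripke.sat, Set.mem_setOf_eq] at hu ⊢
    refine CardGT.mono (fun v hv => ?_) hu
    simp only [Set.mem_setOf_eq] at hv ⊢
    exact ⟨hv.1, ih h hv.2⟩
  | allbut n α φ ih =>
    intro 𝓥 𝓥' h u hu
    simp only [Kripke.sat, Set.mem_setOf_eq] at hu ⊢
    refine CardLE.mono (fun v hv => ?_) hu
    simp only [Set.mem_setOf_eq] at hv ⊢
    exact ⟨hv.1, fun hc => hv.2 (ih h hc)⟩
  | mu y φ ih =>
    intro 𝓥 𝓥' h u hu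
    simp only [Kripke.sat, Set.mem_sInter, Set.mem_setOf_eq] at hu ⊢
    intro S hS
    refine hu S (fun v hv => hS (ih (fun z => ?_) hv))
    by_cases hz : z = y <;> simp [hz, h z]
  | nu y φ ih =>
    intro 𝓥 𝓥' h u hu
    simp only [Kripke.sat, Set.mem_sUnion, Set.mem_setOf_eq] at hu ⊢
    obtain ⟨S, hS, huS⟩ := hu
    refine ⟨S, fun v hv => ih (fun z => ?_) (hS hv), huS⟩
    by_cases hz : z = y <;> simp [hz, h z]

end AuxBasics
section AuxFix

open Classical

variable {P N V Pr W : Type}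

/-- The monotone operator associated with a fixpoint binder. -/
noncomputable def opr (K : Kripke P N Pr W) (ψ : Fml P N V Pr) (𝓥 : V → Set W) (y : V) :
    Set W →o Set W :=
  ⟨fun S => K.sat ψ (fun z => if z = y then S else 𝓥 z),
   fun S S' h => sat_mono K ψ (fun z => by by_cases hz : z = y <;> simp only [hz, if_pos, if_neg, ite_true, ite_false] <;> [exact h; exact subset_rfl])⟩

theorem sat_mu_eq_lfp (K : Kripke P N Pr W) (y : V) (ψ : Fml P N V Pr) (𝓥 : V → Set W) :
    K.sat (.mu y ψ) 𝓥 = OrderHom.lfp (opr K ψ 𝓥 y) := by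
  rw [OrderHom.lfp]
  simp only [Kripke.sat, Set.sInf_eq_sInter, OrderHom.coe_mk]
  rfl

theorem sat_nu_eq_gfp (K : Kripke P N Pr W) (y : V) (ψ : Fml P N V Pr) (𝓥 : V → Set W) :
    K.sat (.nu y ψ) 𝓥 = OrderHom.gfp (opr K ψ 𝓥 y) := by
  rw [OrderHom.gfp]
  simp only [Kripke.sat, Set.sSup_eq_sUnion, OrderHom.coe_mk]
  rfl

theorem mem_lfpApprox_iff (f : Set W →o Set W) (κ : Ordinal) (u : W) :
    u ∈ OrdinalApprox.lfpApprox f ⊥ κ ↔ ∃ l < κ, u ∈ f (OrdinalApprox.lfpApprox f ⊥ l) := by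
  conv_lhs => rw [OrdinalApprox.lfpApprox]
  simp only [Set.bot_eq_empty, Set.sup_eq_union, Set.empty_union, Set.iSup_eq_iUnion,
    Set.mem_iUnion, exists_prop]

theorem mem_gfpApprox_iff (f : Set W →o Set W) (κ : Ordinal) (u : W) :
    u ∈ OrdinalApprox.gfpApprox f ⊤ κ ↔ ∀ l < κ, u ∈ f (OrdinalApprox.gfpApprox f ⊤ l) := by
  conv_lhs => rw [OrdinalApprox.gfpApprox]
  simp only [Set.top_eq_univ, Set.inf_eq_inter, Set.univ_inter, Set.iInf_eq_iInter,
    Set.mem_iInter]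

/-- The rank of an element relative to the `lfp` approximation of `f`. -/
noncomputable def muRank (f : Set W →o Set W) (u : W) : Ordinal :=
  sInf {κ | u ∈ f (OrdinalApprox.lfpApprox f ⊥ κ)}

/-- A Skolem ordinal witnessing failure of membership in a `gfp` approximation. -/
noncomputable def nuSk (f : Set W →o Set W) (u : W) (κ : Ordinal) : Ordinal :=
  sInf {l | l < κ ∧ u ∉ f (OrdinalApprox.gfpApprox f ⊤ l)}

theorem muRank_spec {f : Set W →o Set W} {u : W} {l : Ordinal}
    (h : u ∈ f (OrdinalApprox.lfpApprox f ⊥ l)) :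
    muRank f u ≤ l ∧ u ∈ f (OrdinalApprox.lfpApprox f ⊥ (muRank f u)) := by
  constructor
  · exact csInf_le' h
  · have := csInf_mem (s := {κ | u ∈ f (OrdinalApprox.lfpApprox f ⊥ κ)}) ⟨l, h⟩
    exact this

theorem nuSk_spec {f : Set W →o Set W} {u : W} {κ l : Ordinal}
    (h : l < κ ∧ u ∉ f (OrdinalApprox.gfpApprox f ⊤ l)) :
    nuSk f u κ < κ ∧ u ∉ f (OrdinalApprox.gfpApprox f ⊤ (nuSk f u κ)) := by
  have := csInf_mem (s := {l | l < κ ∧ u ∉ f (OrdinalApprox.gfpApprox f ⊤ l)}) ⟨l, h⟩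
  exact this

end AuxFix
section AuxTransfer

open Classical

variable {P N V Pr : Type}

/-- Transfer of satisfaction along a functional graded bisimulation. -/
theorem sat_transfer {W₁ W₂ : Type} (K₁ : Kripke P N Pr W₁) (K₂ : Kripke P N Pr W₂)
    (π : W₁ → W₂) (R : Set (Prg Pr))
    (hL : ∀ p, K₁.L p = π ⁻¹' K₂.L p)
    (hB1 : ∀ α ∈ R, ∀ x y, K₁.rel α x y → K₂.rel α (π x) (π y))
    (hB2 : ∀ α ∈ R, ∀ x, Set.InjOn π {y | K₁.rel α x y})
    (hB3 : ∀ α ∈ R, ∀ x v, K₂.rel α (π x) v → ∃ y, K₁.rel α x y ∧ π y = v) :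
    ∀ χ : Fml P N V Pr, χ.NoNom → χ.prgs ⊆ R → ∀ 𝓥 : V → Set W₂,
      K₁.sat χ (fun z => π ⁻¹' 𝓥 z) = π ⁻¹' K₂.sat χ 𝓥 := by
  intro χ
  induction χ with
  | tt => intro _ _ _; simp [Kripke.sat]
  | ff => intro _ _ _; simp [Kripke.sat]
  | prop p => intro _ _ _; simp [Kripke.sat, hL]
  | nprop p => intro _ _ _; simp [Kripke.sat, hL, Set.preimage_compl]
  | nom o => intro h; exact absurd h (by simp [Fml.NoNom])
  | nnom o => intro h; exact absurd h (by simp [Fml.NoNom])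
  | var x => intro _ _ _; rfl
  | or φ ψ ihφ ihψ =>
    intro hnn hpr 𝓥
    simp only [Fml.NoNom] at hnn
    simp only [Fml.prgs, Set.union_subset_iff] at hpr
    simp [Kripke.sat, ihφ hnn.1 hpr.1, ihψ hnn.2 hpr.2, Set.preimage_union]
  | and φ ψ ihφ ihψ =>
    intro hnn hpr 𝓥
    simp only [Fml.NoNom] at hnn
    simp only [Fml.prgs, Set.union_subset_iff] at hpr
    simp [Kripke.sat, ihφ hnn.1 hpr.1, ihψ hnn.2 hpr.2, Set.preimage_inter]
  | atleast n α φ ih =>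
    intro hnn hpr 𝓥
    simp only [Fml.NoNom] at hnn
    have hα : α ∈ R := hpr (by simp [Fml.prgs])
    have hpr' : φ.prgs ⊆ R := fun β hβ => hpr (by simp [Fml.prgs, hβ])
    have hsat := ih hnn hpr' 𝓥
    ext x
    simp only [Kripke.sat, Set.mem_setOf_eq, Set.mem_preimage]
    constructor
    · rintro ⟨t, hts, hcard⟩
      refine ⟨t.image π, ?_, ?_⟩
      · intro v hv
        simp only [Finset.coe_image, Set.mem_image] at hv
        obtain ⟨y, hyt, rfl⟩ := hv
        have := hts hyt
        simp only [Set.mem_setOf_eq] at this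
        refine ⟨hB1 α hα x y this.1, ?_⟩
        have : y ∈ π ⁻¹' K₂.sat φ 𝓥 := hsat ▸ this.2
        exact this
      · rwa [Finset.card_image_of_injOn (fun a ha b hb hab =>
          hB2 α hα x (hts ha).1 (hts hb).1 hab)]
    · rintro ⟨t, hts, hcard⟩
      have hch : ∀ v ∈ t, ∃ y, K₁.rel α x y ∧ π y = v := by
        intro v hv
        exact hB3 α hα x v (hts hv).1
      choose g hg1 hg2 using hch
      refine ⟨t.attach.image (fun v => g v.1 v.2), ?_, ?_⟩
      · intro y hy
        simp only [Finset.coe_image, Set.mem_image, Finset.mem_coe, Finset.mem_attach,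
          true_and, Set.mem_setOf_eq] at hy ⊢
        obtain ⟨⟨v, hv⟩, rfl⟩ := hy
        refine ⟨hg1 v hv, ?_⟩
        have h2 := (hts hv).2
        rw [hsat]
        simpa [hg2 v hv] using h2
      · rw [Finset.card_image_of_injOn, Finset.card_attach]
        · exact hcard
        · intro a _ b _ hab
          have h' : π (g a.1 a.2) = π (g b.1 b.2) := congrArg π hab
          rw [hg2, hg2] at h'
          exact Subtype.ext h' 
  | allbut n α φ ih =>
    intro hnn hpr 𝓥
    simp only [Fml.NoNom] at hnn
    have hα : α ∈ R := hpr (by simp [Fml.prgs])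
    have hpr' : φ.prgs ⊆ R := fun β hβ => hpr (by simp [Fml.prgs, hβ])
    have hsat := ih hnn hpr' 𝓥
    ext x
    simp only [Kripke.sat, Set.mem_setOf_eq, Set.mem_preimage]
    constructor
    · rintro ⟨t, hts, hcard⟩
      refine ⟨t.image π, ?_, le_trans Finset.card_image_le hcard⟩
      intro v hv
      simp only [Set.mem_setOf_eq] at hv
      obtain ⟨y, hy, rfl⟩ := hB3 α hα x v hv.1
      have : y ∈ {u | K₁.rel α x u ∧ u ∉ K₁.sat φ fun z => π ⁻¹' 𝓥 z} := by
        refine ⟨hy, ?_⟩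
        rw [hsat]
        exact hv.2
      have := hts this
      simp only [Finset.coe_image, Set.mem_image]
      exact ⟨y, this, rfl⟩
    · rintro ⟨t, hts, hcard⟩
      set g : W₂ → W₁ := fun v =>
        if h : ∃ y, K₁.rel α x y ∧ π y = v then h.choose else Classical.choice K₁.ne with hg
      refine ⟨t.image g, ?_, le_trans Finset.card_image_le hcard⟩
      intro y hy
      simp only [Set.mem_setOf_eq] at hy
      have hv : π y ∈ t := by
        refine hts ?_
        simp only [Set.mem_setOf_eq]
        refine ⟨hB1 α hα x y hy.1, ?_⟩
        intro hc
        exact hy.2 (by rw [hsat]; exact hc)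
      have hex : ∃ y', K₁.rel α x y' ∧ π y' = π y := ⟨y, hy.1, rfl⟩
      have hgy : g (π y) = y := by
        rw [hg]
        simp only [hex, dif_pos]
        exact hB2 α hα x hex.choose_spec.1 hy.1 hex.choose_spec.2
      simp only [Finset.coe_image, Set.mem_image]
      exact ⟨π y, hv, hgy⟩
  | mu y φ ih =>
    intro hnn hpr 𝓥
    simp only [Fml.NoNom] at hnn
    have hupd : ∀ (S : Set W₂), (fun z => if z = y then π ⁻¹' S else π ⁻¹' 𝓥 z)
        = (fun z => π ⁻¹' (if z = y then S else 𝓥 z)) := by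
      intro S; funext z; by_cases hz : z = y <;> simp [hz]
    have key : ∀ S : Set W₂,
        (opr K₁ φ (fun z => π ⁻¹' 𝓥 z) y) (π ⁻¹' S) = π ⁻¹' ((opr K₂ φ 𝓥 y) S) := by
      intro S
      show K₁.sat φ _ = _
      rw [hupd S]
      exact ih hnn hpr _
    rw [sat_mu_eq_lfp, sat_mu_eq_lfp]
    set F₁ := opr K₁ φ (fun z => π ⁻¹' 𝓥 z) y
    set F₂ := opr K₂ φ 𝓥 y
    apply le_antisymm
    · apply OrderHom.lfp_le F₁
      rw [key]
      rw [OrderHom.map_lfp]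
    · intro u hu
      set S' : Set W₂ := {v | ∀ z, π z = v → z ∈ OrderHom.lfp F₁} with hS'
      have hpre : F₂ S' ≤ S' := by
        intro v hv z hz
        have hsub : π ⁻¹' S' ≤ OrderHom.lfp F₁ := fun a ha => ha a rfl
        have : z ∈ π ⁻¹' (F₂ S') := by rw [Set.mem_preimage, hz]; exact hv
        rw [← key] at this
        have := F₁.mono hsub this
        rwa [OrderHom.map_lfp] at this
      have : OrderHom.lfp F₂ ≤ S' := OrderHom.lfp_le F₂ hpre
      exact this hu _ rfl
  | nu y φ ih =>
    intro hnn hpr 𝓥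
    simp only [Fml.NoNom] at hnn
    have hupd : ∀ (S : Set W₂), (fun z => if z = y then π ⁻¹' S else π ⁻¹' 𝓥 z)
        = (fun z => π ⁻¹' (if z = y then S else 𝓥 z)) := by
      intro S; funext z; by_cases hz : z = y <;> simp [hz]
    have key : ∀ S : Set W₂,
        (opr K₁ φ (fun z => π ⁻¹' 𝓥 z) y) (π ⁻¹' S) = π ⁻¹' ((opr K₂ φ 𝓥 y) S) := by
      intro S
      show K₁.sat φ _ = _
      rw [hupd S]
      exact ih hnn hpr _
    rw [sat_nu_eq_gfp, sat_nu_eq_gfp]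
    set G₁ := opr K₁ φ (fun z => π ⁻¹' 𝓥 z) y
    set G₂ := opr K₂ φ 𝓥 y
    apply le_antisymm
    · intro u hu
      set S' : Set W₂ := π '' (OrderHom.gfp G₁) with hS'
      have hpost : S' ≤ G₂ S' := by
        rintro v ⟨z, hz, rfl⟩
        have h1 : z ∈ G₁ (OrderHom.gfp G₁) := by rw [OrderHom.map_gfp]; exact hz
        have h2 : OrderHom.gfp G₁ ≤ π ⁻¹' S' := fun a ha => ⟨a, ha, rfl⟩
        have := G₁.mono h2 h1
        rw [key] at this
        exact this
      exact OrderHom.le_gfp G₂ hpost ⟨u, hu, rfl⟩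
    · apply OrderHom.le_gfp G₁
      rw [key, OrderHom.map_gfp]

end AuxTransfer
section AuxSyntax

open Classical

variable {P N V Pr W : Type}

/-- All subformulas of a formula (including itself). -/
def subf : Fml P N V Pr → List (Fml P N V Pr)
  | .or a b => .or a b :: (subf a ++ subf b)
  | .and a b => .and a b :: (subf a ++ subf b)
  | .atleast n α a => .atleast n α a :: subf a
  | .allbut n α a => .allbut n α a :: subf a
  | .mu y a => .mu y a :: subf a
  | .nu y a => .nu y a :: subf a
  | f => [f]

theorem self_mem_subf (χ : Fml P N V Pr) : χ ∈ subf χ := by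
  cases χ <;> simp [subf]

theorem subf_sub : ∀ {φ χ : Fml P N V Pr}, χ ∈ subf φ → subf χ ⊆ subf φ := by
  intro φ
  induction φ with
  | or a b iha ihb =>
    intro χ hχ
    simp only [subf, List.mem_cons, List.mem_append] at hχ
    rcases hχ with rfl | h | h
    · exact fun x hx => hx
    · intro x hx
      simp only [subf, List.mem_cons, List.mem_append]
      exact Or.inr (Or.inl (iha h hx))
    · intro x hx
      simp only [subf, List.mem_cons, List.mem_append]
      exact Or.inr (Or.inr (ihb h hx))
  | and a b iha ihb =>
    intro χ hχ
    simp only [subf, List.mem_cons, List.mem_append] at hχ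
    rcases hχ with rfl | h | h
    · exact fun x hx => hx
    · intro x hx
      simp only [subf, List.mem_cons, List.mem_append]
      exact Or.inr (Or.inl (iha h hx))
    · intro x hx
      simp only [subf, List.mem_cons, List.mem_append]
      exact Or.inr (Or.inr (ihb h hx))
  | atleast n α a iha =>
    intro χ hχ
    simp only [subf, List.mem_cons] at hχ
    rcases hχ with rfl | h
    · exact fun x hx => hx
    · intro x hx
      simp only [subf, List.mem_cons]
      exact Or.inr (iha h hx)
  | allbut n α a iha =>
    intro χ hχ
    simp only [subf, List.mem_cons] at hχ
    rcases hχ with rfl | h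
    · exact fun x hx => hx
    · intro x hx
      simp only [subf, List.mem_cons]
      exact Or.inr (iha h hx)
  | mu y a iha =>
    intro χ hχ
    simp only [subf, List.mem_cons] at hχ
    rcases hχ with rfl | h
    · exact fun x hx => hx
    · intro x hx
      simp only [subf, List.mem_cons]
      exact Or.inr (iha h hx)
  | nu y a iha =>
    intro χ hχ
    simp only [subf, List.mem_cons] at hχ
    rcases hχ with rfl | h
    · exact fun x hx => hx
    · intro x hx
      simp only [subf, List.mem_cons]
      exact Or.inr (iha h hx)
  | tt => intro χ hχ; simp [subf] at hχ; subst hχ; exact fun x hx => hx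
  | ff => intro χ hχ; simp [subf] at hχ; subst hχ; exact fun x hx => hx
  | prop p => intro χ hχ; simp [subf] at hχ; subst hχ; exact fun x hx => hx
  | nprop p => intro χ hχ; simp [subf] at hχ; subst hχ; exact fun x hx => hx
  | nom o => intro χ hχ; simp [subf] at hχ; subst hχ; exact fun x hx => hx
  | nnom o => intro χ hχ; simp [subf] at hχ; subst hχ; exact fun x hx => hx
  | var x => intro χ hχ; simp [subf] at hχ; subst hχ; exact fun x hx => hx

theorem noNom_subf {φ : Fml P N V Pr} (h : φ.NoNom) : ∀ χ ∈ subf φ, χ.NoNom := by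
  induction φ with
  | or a b iha ihb =>
    intro χ hχ
    simp only [subf, List.mem_cons, List.mem_append] at hχ
    rcases hχ with rfl | hc | hc
    · exact h
    · exact iha h.1 χ hc
    · exact ihb h.2 χ hc
  | and a b iha ihb =>
    intro χ hχ
    simp only [subf, List.mem_cons, List.mem_append] at hχ
    rcases hχ with rfl | hc | hc
    · exact h
    · exact iha h.1 χ hc
    · exact ihb h.2 χ hc
  | atleast n α a iha =>
    intro χ hχ
    simp only [subf, List.mem_cons] at hχ
    rcases hχ with rfl | hc
    · exact h
    · exact iha h χ hc
  | allbut n α a iha =>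
    intro χ hχ
    simp only [subf, List.mem_cons] at hχ
    rcases hχ with rfl | hc
    · exact h
    · exact iha h χ hc
  | mu y a iha =>
    intro χ hχ
    simp only [subf, List.mem_cons] at hχ
    rcases hχ with rfl | hc
    · exact h
    · exact iha h χ hc
  | nu y a iha =>
    intro χ hχ
    simp only [subf, List.mem_cons] at hχ
    rcases hχ with rfl | hc
    · exact h
    · exact iha h χ hc
  | tt => intro χ hχ; simp [subf] at hχ; subst hχ; exact h
  | ff => intro χ hχ; simp [subf] at hχ; subst hχ; exact h
  | prop p => intro χ hχ; simp [subf] at hχ; subst hχ; exact h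
  | nprop p => intro χ hχ; simp [subf] at hχ; subst hχ; exact h
  | nom o => intro χ hχ; simp [subf] at hχ; subst hχ; exact h
  | nnom o => intro χ hχ; simp [subf] at hχ; subst hχ; exact h
  | var x => intro χ hχ; simp [subf] at hχ; subst hχ; exact h

/-- The binders occurring in (subformulas of) a formula. -/
def binderAlph (φ : Fml P N V Pr) : List (Bool × V × Fml P N V Pr) :=
  (subf φ).filterMap (fun χ => match χ with
    | .mu y a => some (true, y, a)
    | .nu y a => some (false, y, a)
    | _ => none)

theorem mem_binderAlph_mu {φ : Fml P N V Pr} {y : V} {a : Fml P N V Pr}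
    (h : Fml.mu y a ∈ subf φ) : (true, y, a) ∈ binderAlph φ :=
  List.mem_filterMap.mpr ⟨Fml.mu y a, h, rfl⟩

theorem mem_binderAlph_nu {φ : Fml P N V Pr} {y : V} {a : Fml P N V Pr}
    (h : Fml.nu y a ∈ subf φ) : (false, y, a) ∈ binderAlph φ :=
  List.mem_filterMap.mpr ⟨Fml.nu y a, h, rfl⟩

theorem countable_lists {A : Type*} {s : Set A} (hs : s.Countable) :
    {l : List A | ∀ x ∈ l, x ∈ s}.Countable := by
  have : Countable s := hs.to_subtype
  have hsub : {l : List A | ∀ x ∈ l, x ∈ s} ⊆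
      Set.range (fun l : List s => l.map Subtype.val) := by
    intro l hl
    refine ⟨l.attach.map (fun x => ⟨x.1, hl x.1 x.2⟩), ?_⟩
    simp only [List.map_map]
    conv_rhs => rw [← List.attach_map_subtype_val l]
    rfl
  exact (Set.countable_range _).mono hsub

end AuxSyntax
section AuxClosure

open Classical OrdinalApprox

variable {P N V Pr W : Type}

/-- Ordinal-staged value of a fixpoint binder. -/
noncomputable def stage (K : Kripke P N Pr W) (q : Bool) (y : V) (ψ : Fml P N V Pr)
    (𝓥 : V → Set W) (κ : Ordinal) : Set W :=
  match q with
  | true => lfpApprox (opr K ψ 𝓥 y) ⊥ κ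
  | false => gfpApprox (opr K ψ 𝓥 y) ⊤ κ

/-- The environment determined by a chain of staged binders (innermost first). -/
noncomputable def chEnv (K : Kripke P N Pr W) :
    List ((Bool × V × Fml P N V Pr) × Ordinal) → V → Set W
  | [] => fun _ => ∅
  | (e, κ) :: c => fun z =>
      if z = e.2.1 then stage K e.1 e.2.1 e.2.2 (chEnv K c) κ else chEnv K c z

/-- An ordinal large enough that all fixpoint approximations over `Set W` stabilize. -/
noncomputable def bigOrd (W : Type) : Ordinal := (Order.succ (Cardinal.mk (Set W))).ord

theorem stage_mu_bigOrd (K : Kripke P N Pr W) (y : V) (ψ : Fml P N V Pr) (𝓥 : V → Set W) :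
    stage K true y ψ 𝓥 (bigOrd W) = K.sat (.mu y ψ) 𝓥 := by
  rw [sat_mu_eq_lfp]
  exact lfpApprox_ord_eq_lfp (opr K ψ 𝓥 y)

theorem stage_nu_bigOrd (K : Kripke P N Pr W) (y : V) (ψ : Fml P N V Pr) (𝓥 : V → Set W) :
    stage K false y ψ 𝓥 (bigOrd W) = K.sat (.nu y ψ) 𝓥 := by
  rw [sat_nu_eq_gfp]
  exact gfpApprox_ord_eq_gfp (opr K ψ 𝓥 y)

/-- Valid shape/subformula pairs relative to `φ₀`. -/
def SC (φ₀ : Fml P N V Pr) : Set (List (Bool × V × Fml P N V Pr) × Fml P N V Pr) :=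
  {p | (∀ e ∈ p.1, e ∈ binderAlph φ₀) ∧ p.2 ∈ subf φ₀}

theorem SC_countable (φ₀ : Fml P N V Pr) : (SC φ₀).Countable := by
  have h1 : {l : List (Bool × V × Fml P N V Pr) | ∀ e ∈ l, e ∈ binderAlph φ₀}.Countable :=
    countable_lists (binderAlph φ₀).finite_toSet.countable
  have h2 : {χ : Fml P N V Pr | χ ∈ subf φ₀}.Countable := (subf φ₀).finite_toSet.countable
  refine (h1.prod h2).mono (fun p hp => ?_)
  exact ⟨hp.1, hp.2⟩

/-- Finset of more than `n` witnesses inside a set, when it exists. -/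
noncomputable def gtWit {α : Type*} (S : Set α) (n : ℕ) : Finset α :=
  if h : CardGT S n then h.choose else ∅

theorem gtWit_spec {α : Type*} {S : Set α} {n : ℕ} (h : CardGT S n) :
    ↑(gtWit S n) ⊆ S ∧ n < (gtWit S n).card := by
  rw [gtWit, dif_pos h]
  exact h.choose_spec

/-- State-witnesses needed for the graded modalities. -/
noncomputable def witSet (K : Kripke P N Pr W) (s : List (Bool × V × Fml P N V Pr))
    (χ : Fml P N V Pr) (κs : List Ordinal) (u : W) : Set W :=
  match χ with
  | .atleast n α ψ => ↑(gtWit {v | K.rel α u v ∧ v ∈ K.sat ψ (chEnv K (s.zip κs))} n)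
  | .allbut n α ψ => ↑(gtWit {v | K.rel α u v ∧ v ∉ K.sat ψ (chEnv K (s.zip κs))} n)
  | _ => (∅ : Set W)

/-- Ordinal-witnesses needed for the fixpoint cases. -/
noncomputable def witOrd (K : Kripke P N Pr W) (s : List (Bool × V × Fml P N V Pr))
    (χ : Fml P N V Pr) (κs : List Ordinal) (u : W) (κ : Ordinal) : Set Ordinal :=
  match χ with
  | .mu y ψ => {muRank (opr K ψ (chEnv K (s.zip κs)) y) u}
  | .nu y ψ => {nuSk (opr K ψ (chEnv K (s.zip κs)) y) u κ}
  | _ => ∅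

theorem witSet_countable (K : Kripke P N Pr W) (s) (χ : Fml P N V Pr) (κs) (u : W) :
    (witSet K s χ κs u).Countable := by
  cases χ <;> first
    | exact Set.countable_empty
    | exact (gtWit _ _).countable_toSet

theorem witOrd_countable (K : Kripke P N Pr W) (s) (χ : Fml P N V Pr) (κs) (u : W) (κ) :
    (witOrd K s χ κs u κ).Countable := by
  cases χ <;> first
    | exact Set.countable_empty
    | exact Set.countable_singleton _

noncomputable def stepW (K : Kripke P N Pr W) (φ₀ : Fml P N V Pr) (w : W)
    (X : Set W) (O : Set Ordinal) : Set W :=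
  X ∪ {w} ∪ ⋃ p ∈ SC φ₀, ⋃ κs ∈ {m : List Ordinal | ∀ κ ∈ m, κ ∈ O}, ⋃ u ∈ X,
    witSet K p.1 p.2 κs u

noncomputable def stepO (K : Kripke P N Pr W) (φ₀ : Fml P N V Pr)
    (X : Set W) (O : Set Ordinal) : Set Ordinal :=
  O ∪ {bigOrd W} ∪ ⋃ p ∈ SC φ₀, ⋃ κs ∈ {m : List Ordinal | ∀ κ ∈ m, κ ∈ O}, ⋃ u ∈ X,
    ⋃ κ ∈ O, witOrd K p.1 p.2 κs u κ

noncomputable def iterWO (K : Kripke P N Pr W) (φ₀ : Fml P N V Pr) (w : W) :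
    ℕ → Set W × Set Ordinal
  | 0 => ({w}, {bigOrd W})
  | n + 1 => (stepW K φ₀ w (iterWO K φ₀ w n).1 (iterWO K φ₀ w n).2,
              stepO K φ₀ (iterWO K φ₀ w n).1 (iterWO K φ₀ w n).2)

/-- The countable set of states of the extracted submodel. -/
noncomputable def Wc (K : Kripke P N Pr W) (φ₀ : Fml P N V Pr) (w : W) : Set W :=
  ⋃ n, (iterWO K φ₀ w n).1

/-- The countable set of relevant ordinal stages. -/
noncomputable def Oc (K : Kripke P N Pr W) (φ₀ : Fml P N V Pr) (w : W) : Set Ordinal :=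
  ⋃ n, (iterWO K φ₀ w n).2

theorem iterWO_succ_sub (K : Kripke P N Pr W) (φ₀ : Fml P N V Pr) (w : W) (n : ℕ) :
    (iterWO K φ₀ w n).1 ⊆ (iterWO K φ₀ w (n+1)).1 ∧
      (iterWO K φ₀ w n).2 ⊆ (iterWO K φ₀ w (n+1)).2 :=
  ⟨fun x hx => Set.mem_union_left _ (Set.mem_union_left _ hx),
   fun x hx => Set.mem_union_left _ (Set.mem_union_left _ hx)⟩

theorem iterWO_mono (K : Kripke P N Pr W) (φ₀ : Fml P N V Pr) (w : W) {m n : ℕ} (h : m ≤ n) :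
    (iterWO K φ₀ w m).1 ⊆ (iterWO K φ₀ w n).1 ∧ (iterWO K φ₀ w m).2 ⊆ (iterWO K φ₀ w n).2 := by
  induction h with
  | refl => exact ⟨subset_rfl, subset_rfl⟩
  | @step n h ih =>
    exact ⟨ih.1.trans (iterWO_succ_sub K φ₀ w n).1, ih.2.trans (iterWO_succ_sub K φ₀ w n).2⟩

theorem w_mem_Wc (K : Kripke P N Pr W) (φ₀ : Fml P N V Pr) (w : W) : w ∈ Wc K φ₀ w :=
  Set.mem_iUnion.mpr ⟨0, rfl⟩

theorem bigOrd_mem_Oc (K : Kripke P N Pr W) (φ₀ : Fml P N V Pr) (w : W) :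
    bigOrd W ∈ Oc K φ₀ w :=
  Set.mem_iUnion.mpr ⟨0, rfl⟩

end AuxClosure
section AuxClosure2

open Classical OrdinalApprox

variable {P N V Pr W : Type}

theorem iterWO_countable (K : Kripke P N Pr W) (φ₀ : Fml P N V Pr) (w : W) (n : ℕ) :
    (iterWO K φ₀ w n).1.Countable ∧ (iterWO K φ₀ w n).2.Countable := by
  induction n with
  | zero => exact ⟨Set.countable_singleton _, Set.countable_singleton _⟩
  | succ n ih =>
    obtain ⟨h1, h2⟩ := ih
    constructor
    · refine ((h1.union (Set.countable_singleton _)).union ?_)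
      refine Set.Countable.biUnion (SC_countable φ₀) (fun p _ => ?_)
      refine Set.Countable.biUnion (countable_lists h2) (fun κs _ => ?_)
      refine Set.Countable.biUnion h1 (fun u _ => ?_)
      exact witSet_countable K p.1 p.2 κs u
    · refine ((h2.union (Set.countable_singleton _)).union ?_)
      refine Set.Countable.biUnion (SC_countable φ₀) (fun p _ => ?_)
      refine Set.Countable.biUnion (countable_lists h2) (fun κs _ => ?_)
      refine Set.Countable.biUnion h1 (fun u _ => ?_)
      refine Set.Countable.biUnion h2 (fun κ _ => ?_)
      exact witOrd_countable K p.1 p.2 κs u κ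

theorem Wc_countable (K : Kripke P N Pr W) (φ₀ : Fml P N V Pr) (w : W) :
    (Wc K φ₀ w).Countable :=
  Set.countable_iUnion (fun n => (iterWO_countable K φ₀ w n).1)

/-- All the entries of a finite list of elements of `Oc` lie in some finite iteration stage. -/
theorem list_mem_stage (K : Kripke P N Pr W) (φ₀ : Fml P N V Pr) (w : W) (κs : List Ordinal)
    (h : ∀ κ ∈ κs, κ ∈ Oc K φ₀ w) : ∃ n, ∀ κ ∈ κs, κ ∈ (iterWO K φ₀ w n).2 := by
  induction κs with
  | nil => exact ⟨0, by simp⟩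
  | cons a l ih =>
    obtain ⟨n, hn⟩ := ih (fun κ hκ => h κ (List.mem_cons_of_mem a hκ))
    obtain ⟨m, hm⟩ := Set.mem_iUnion.mp (h a List.mem_cons_self)
    refine ⟨max n m, ?_⟩
    intro κ hκ
    rcases List.mem_cons.mp hκ with rfl | hκ
    · exact (iterWO_mono K φ₀ w (le_max_right n m)).2 hm
    · exact (iterWO_mono K φ₀ w (le_max_left n m)).2 (hn κ hκ)

theorem closure_witSet (K : Kripke P N Pr W) (φ₀ : Fml P N V Pr) (w : W)
    {s : List (Bool × V × Fml P N V Pr)} {χ : Fml P N V Pr} (hp : (s, χ) ∈ SC φ₀)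
    {κs : List Ordinal} (hκs : ∀ κ ∈ κs, κ ∈ Oc K φ₀ w) {u : W} (hu : u ∈ Wc K φ₀ w) :
    witSet K s χ κs u ⊆ Wc K φ₀ w := by
  obtain ⟨n, hn⟩ := list_mem_stage K φ₀ w κs hκs
  obtain ⟨m, hm⟩ := Set.mem_iUnion.mp hu
  intro v hv
  refine Set.mem_iUnion.mpr ⟨max n m + 1, ?_⟩
  refine Set.mem_union_right _ ?_
  refine Set.mem_biUnion hp ?_
  refine Set.mem_biUnion (fun κ hκ => (iterWO_mono K φ₀ w (le_max_left n m)).2 (hn κ hκ)) ?_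
  exact Set.mem_biUnion ((iterWO_mono K φ₀ w (le_max_right n m)).1 hm) hv

theorem closure_witOrd (K : Kripke P N Pr W) (φ₀ : Fml P N V Pr) (w : W)
    {s : List (Bool × V × Fml P N V Pr)} {χ : Fml P N V Pr} (hp : (s, χ) ∈ SC φ₀)
    {κs : List Ordinal} (hκs : ∀ κ ∈ κs, κ ∈ Oc K φ₀ w) {u : W} (hu : u ∈ Wc K φ₀ w)
    {κ : Ordinal} (hκ : κ ∈ Oc K φ₀ w) :
    witOrd K s χ κs u κ ⊆ Oc K φ₀ w := by
  obtain ⟨n, hn⟩ := list_mem_stage K φ₀ w κs hκs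
  obtain ⟨m, hm⟩ := Set.mem_iUnion.mp hu
  obtain ⟨k, hk⟩ := Set.mem_iUnion.mp hκ
  intro l hl
  refine Set.mem_iUnion.mpr ⟨max (max n m) k + 1, ?_⟩
  refine Set.mem_union_right _ ?_
  refine Set.mem_biUnion hp ?_
  refine Set.mem_biUnion (fun κ' hκ' =>
    (iterWO_mono K φ₀ w ((le_max_left n m).trans (le_max_left _ k))).2 (hn κ' hκ')) ?_
  refine Set.mem_biUnion
    ((iterWO_mono K φ₀ w ((le_max_right n m).trans (le_max_left _ k))).1 hm) ?_
  exact Set.mem_biUnion ((iterWO_mono K φ₀ w (le_max_right _ k)).2 hk) hl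

/-- Restriction of a Kripke structure to a nonempty set of states. -/
noncomputable def restrK (K : Kripke P N Pr W) (X : Set W) (hne : X.Nonempty) :
    Kripke P N Pr X :=
  { ne := ⟨⟨hne.choose, hne.choose_spec⟩⟩,
    R := fun a x y => K.R a x.1 y.1,
    L := fun p => {x | x.1 ∈ K.L p},
    nomVal := fun _ => ⟨hne.choose, hne.choose_spec⟩ }

theorem restrK_rel (K : Kripke P N Pr W) (X : Set W) (hne : X.Nonempty) (α : Prg Pr)
    (x y : X) : (restrK K X hne).rel α x y ↔ K.rel α x.1 y.1 := by
  cases α <;> exact Iff.rfl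

end AuxClosure2
section AuxMain

open Classical OrdinalApprox

variable {P N V Pr W : Type}

theorem lfpApprox_bigOrd (f : Set W →o Set W) :
    lfpApprox f ⊥ (bigOrd W) = OrderHom.lfp f := lfpApprox_ord_eq_lfp f

theorem gfpApprox_bigOrd (f : Set W →o Set W) :
    gfpApprox f ⊤ (bigOrd W) = OrderHom.gfp f := gfpApprox_ord_eq_gfp f

theorem main_restrict (K : Kripke P N Pr W) (φ₀ : Fml P N V Pr) (w : W) :
    ∀ χ : Fml P N V Pr, χ.NoNom → χ ∈ subf φ₀ →
    ∀ (s : List (Bool × V × Fml P N V Pr)) (κs : List Ordinal),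
      (∀ e ∈ s, e ∈ binderAlph φ₀) → (∀ κ ∈ κs, κ ∈ Oc K φ₀ w) → s.length = κs.length →
      (restrK K (Wc K φ₀ w) ⟨w, w_mem_Wc K φ₀ w⟩).sat χ
          (fun z => (Subtype.val ⁻¹' chEnv K (s.zip κs) z : Set (Wc K φ₀ w)))
        = Subtype.val ⁻¹' K.sat χ (chEnv K (s.zip κs)) := by
  intro χ
  induction χ with
  | tt => intro _ _ s κs _ _ _; ext x; simp [Kripke.sat]
  | ff => intro _ _ s κs _ _ _; ext x; simp [Kripke.sat]
  | prop p => intro _ _ s κs _ _ _; ext x; simp [Kripke.sat, restrK]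
  | nprop p => intro _ _ s κs _ _ _; ext x; simp [Kripke.sat, restrK]
  | nom o => intro h _; exact absurd h (by simp [Fml.NoNom])
  | nnom o => intro h _; exact absurd h (by simp [Fml.NoNom])
  | var x => intro _ _ s κs _ _ _; rfl
  | or a b iha ihb =>
    intro hnn hmem s κs hs hκs hlen
    have hma : a ∈ subf φ₀ := subf_sub hmem (by simp [subf, self_mem_subf])
    have hmb : b ∈ subf φ₀ := subf_sub hmem (by simp [subf, self_mem_subf])
    show (restrK K (Wc K φ₀ w) _).sat a _ ∪ (restrK K (Wc K φ₀ w) _).sat b _ = _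
    rw [iha hnn.1 hma s κs hs hκs hlen, ihb hnn.2 hmb s κs hs hκs hlen]
    exact (Set.preimage_union).symm
  | and a b iha ihb =>
    intro hnn hmem s κs hs hκs hlen
    have hma : a ∈ subf φ₀ := subf_sub hmem (by simp [subf, self_mem_subf])
    have hmb : b ∈ subf φ₀ := subf_sub hmem (by simp [subf, self_mem_subf])
    show (restrK K (Wc K φ₀ w) _).sat a _ ∩ (restrK K (Wc K φ₀ w) _).sat b _ = _
    rw [iha hnn.1 hma s κs hs hκs hlen, ihb hnn.2 hmb s κs hs hκs hlen]
    exact (Set.preimage_inter).symm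
  | atleast n α ψ ih =>
    intro hnn hmem s κs hs hκs hlen
    have hmψ : ψ ∈ subf φ₀ := subf_sub hmem (by simp [subf, self_mem_subf])
    have hsat := ih hnn hmψ s κs hs hκs hlen
    ext x
    simp only [Kripke.sat, Set.mem_setOf_eq, Set.mem_preimage]
    constructor
    · rintro ⟨t, hts, hcard⟩
      refine ⟨t.image Subtype.val, ?_, ?_⟩
      · intro v hv
        simp only [Finset.coe_image, Set.mem_image] at hv
        obtain ⟨z, hzt, rfl⟩ := hv
        have h1 := hts hzt
        simp only [Set.mem_setOf_eq] at h1
        refine ⟨(restrK_rel K _ _ α x z).mp h1.1, ?_⟩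
        have h2 : z ∈ Subtype.val ⁻¹' K.sat ψ (chEnv K (s.zip κs)) := hsat ▸ h1.2
        exact h2
      · rwa [Finset.card_image_of_injective _ Subtype.val_injective]
    · rintro ⟨t0, hts0, hcard0⟩
      have hgt : CardGT {v | K.rel α x.1 v ∧ v ∈ K.sat ψ (chEnv K (s.zip κs))} n :=
        ⟨t0, hts0, hcard0⟩
      have hspec := gtWit_spec hgt
      have hsubWc : ↑(gtWit {v | K.rel α x.1 v ∧ v ∈ K.sat ψ (chEnv K (s.zip κs))} n)
          ⊆ Wc K φ₀ w :=
        closure_witSet K φ₀ w (show (s, Fml.atleast n α ψ) ∈ SC φ₀ from ⟨hs, hmem⟩) hκs x.2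
      set t := gtWit {v | K.rel α x.1 v ∧ v ∈ K.sat ψ (chEnv K (s.zip κs))} n with ht
      refine ⟨t.attach.image (fun v => (⟨v.1, hsubWc v.2⟩ : {a // a ∈ Wc K φ₀ w})), ?_, ?_⟩
      · intro z hz
        simp only [Finset.coe_image, Set.mem_image, Finset.mem_coe, Finset.mem_attach,
          true_and] at hz
        obtain ⟨⟨v, hv⟩, rfl⟩ := hz
        have h1 := hspec.1 hv
        simp only [Set.mem_setOf_eq] at h1 ⊢
        refine ⟨(restrK_rel K _ _ α x _).mpr h1.1, ?_⟩
        rw [hsat]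
        exact h1.2
      · rw [Finset.card_image_of_injOn, Finset.card_attach]
        · exact hspec.2
        · intro a _ b _ hab
          simp only [Subtype.mk.injEq] at hab
          exact Subtype.ext hab
  | allbut n α ψ ih =>
    intro hnn hmem s κs hs hκs hlen
    have hmψ : ψ ∈ subf φ₀ := subf_sub hmem (by simp [subf, self_mem_subf])
    have hsat := ih hnn hmψ s κs hs hκs hlen
    ext x
    simp only [Kripke.sat, Set.mem_setOf_eq, Set.mem_preimage]
    constructor
    · -- from the submodel to the big model, by contradiction using the closure witnesses
      intro hle
      by_contra hnle
      have hgt : CardGT {v | K.rel α x.1 v ∧ v ∉ K.sat ψ (chEnv K (s.zip κs))} n :=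
        not_cardLE_iff_cardGT.mp hnle
      have hspec := gtWit_spec hgt
      have hsubWc : ↑(gtWit {v | K.rel α x.1 v ∧ v ∉ K.sat ψ (chEnv K (s.zip κs))} n)
          ⊆ Wc K φ₀ w :=
        closure_witSet K φ₀ w (show (s, Fml.allbut n α ψ) ∈ SC φ₀ from ⟨hs, hmem⟩) hκs x.2
      set t := gtWit {v | K.rel α x.1 v ∧ v ∉ K.sat ψ (chEnv K (s.zip κs))} n with ht
      have hgt' : CardGT {z : {a // a ∈ Wc K φ₀ w} |
          (restrK K (Wc K φ₀ w) ⟨w, w_mem_Wc K φ₀ w⟩).rel α x z ∧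
            z ∉ (restrK K (Wc K φ₀ w) ⟨w, w_mem_Wc K φ₀ w⟩).sat ψ
              (fun z => Subtype.val ⁻¹' chEnv K (s.zip κs) z)} n := by
        refine ⟨t.attach.image (fun v => (⟨v.1, hsubWc v.2⟩ : {a // a ∈ Wc K φ₀ w})), ?_, ?_⟩
        · intro z hz
          simp only [Finset.coe_image, Set.mem_image, Finset.mem_coe, Finset.mem_attach,
            true_and] at hz
          obtain ⟨⟨v, hv⟩, rfl⟩ := hz
          have h1 := hspec.1 hv
          simp only [Set.mem_setOf_eq] at h1 ⊢
          refine ⟨(restrK_rel K _ _ α x _).mpr h1.1, ?_⟩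
          rw [hsat]
          exact h1.2
        · rw [Finset.card_image_of_injOn, Finset.card_attach]
          · exact hspec.2
          · intro a _ b _ hab
            simp only [Subtype.mk.injEq] at hab
            exact Subtype.ext hab
      exact (not_cardLE_iff_cardGT.mpr hgt') hle
    · rintro ⟨t, hts, hcard⟩
      refine ⟨Finset.preimage t Subtype.val (Subtype.val_injective.injOn), ?_, ?_⟩
      · intro z hz
        simp only [Set.mem_setOf_eq] at hz
        have h1 : z.1 ∈ {v | K.rel α x.1 v ∧ v ∉ K.sat ψ (chEnv K (s.zip κs))} := by
          refine ⟨(restrK_rel K _ _ α x z).mp hz.1, ?_⟩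
          intro hc
          exact hz.2 (by rw [hsat]; exact hc)
        simp only [Finset.coe_preimage, Set.mem_preimage]
        exact hts h1
      · refine le_trans (Finset.card_le_card_of_injOn Subtype.val
          (fun a ha => by simpa using Finset.mem_preimage.mp ha)
          (Subtype.val_injective.injOn)) hcard
  | mu y ψ ih =>
    intro hnn hmem s κs hs hκs hlen
    have hmψ : ψ ∈ subf φ₀ := subf_sub hmem (by simp [subf, self_mem_subf])
    have hbind : (true, y, ψ) ∈ binderAlph φ₀ := mem_binderAlph_mu hmem
    have hΘ := bigOrd_mem_Oc K φ₀ w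
    rw [sat_mu_eq_lfp, sat_mu_eq_lfp]
    set F := opr K ψ (chEnv K (s.zip κs)) y with hF
    set F' := opr (restrK K (Wc K φ₀ w) ⟨w, w_mem_Wc K φ₀ w⟩) ψ
      (fun z => (Subtype.val ⁻¹' chEnv K (s.zip κs) z : Set {a // a ∈ Wc K φ₀ w})) y with hF'
    have key : ∀ κ ∈ Oc K φ₀ w,
        F' (Subtype.val ⁻¹' (lfpApprox F ⊥ κ)) = Subtype.val ⁻¹' (F (lfpApprox F ⊥ κ)) := by
      intro κ hκ
      have hihκ := ih hnn hmψ ((true, y, ψ) :: s) (κ :: κs)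
        (by intro e' he'
            rcases List.mem_cons.mp he' with rfl | h
            · exact hbind
            · exact hs e' h)
        (by intro κ' hκ'
            rcases List.mem_cons.mp hκ' with rfl | h
            · exact hκ
            · exact hκs κ' h)
        (by simpa using hlen)
      simp only [List.zip_cons_cons] at hihκ
      have henv2 : (fun z => (Subtype.val ⁻¹' chEnv K (((true, y, ψ), κ) :: s.zip κs) z :
            Set {a // a ∈ Wc K φ₀ w}))
          = (fun z => if z = y then Subtype.val ⁻¹' (lfpApprox F ⊥ κ)
              else Subtype.val ⁻¹' chEnv K (s.zip κs) z) := by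
        funext z
        by_cases hz : z = y <;> simp [chEnv, stage, hz, ← hF]
      rw [henv2] at hihκ
      exact hihκ
    apply le_antisymm
    · apply OrderHom.lfp_le F'
      have heq : F' (Subtype.val ⁻¹' OrderHom.lfp F) = Subtype.val ⁻¹' OrderHom.lfp F := calc
        F' (Subtype.val ⁻¹' OrderHom.lfp F)
            = F' (Subtype.val ⁻¹' (lfpApprox F ⊥ (bigOrd W))) := by rw [lfpApprox_bigOrd]
        _ = Subtype.val ⁻¹' (F (lfpApprox F ⊥ (bigOrd W))) := key _ hΘ
        _ = Subtype.val ⁻¹' (F (OrderHom.lfp F)) := by rw [lfpApprox_bigOrd]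
        _ = Subtype.val ⁻¹' (OrderHom.lfp F) := by rw [OrderHom.map_lfp]
      exact le_of_eq heq
    · have claim : ∀ κ : Ordinal, κ ∈ Oc K φ₀ w → ∀ u : {a // a ∈ Wc K φ₀ w},
          u.1 ∈ F (lfpApprox F ⊥ κ) → u ∈ OrderHom.lfp F' := by
        intro κ
        induction κ using Ordinal.induction with
        | h κ ihord =>
          intro hκ u hu
          have hsub : (Subtype.val ⁻¹' (lfpApprox F ⊥ κ) : Set {a // a ∈ Wc K φ₀ w})
              ⊆ OrderHom.lfp F' := by
            intro v hv
            obtain ⟨l, hl, hvl⟩ := (mem_lfpApprox_iff F κ v.1).mp hv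
            have hrs := muRank_spec (f := F) hvl
            have hrOc : muRank F v.1 ∈ Oc K φ₀ w := by
              have hcl := closure_witOrd K φ₀ w
                (show (s, Fml.mu y ψ) ∈ SC φ₀ from ⟨hs, hmem⟩) hκs v.2 hΘ
              exact hcl rfl
            exact ihord _ (lt_of_le_of_lt hrs.1 hl) hrOc v hrs.2
          have h1 : u ∈ F' (Subtype.val ⁻¹' (lfpApprox F ⊥ κ)) := by
            rw [key _ hκ]; exact hu
          have h2 := F'.mono hsub h1
          rwa [OrderHom.map_lfp] at h2
      intro u hu
      rw [Set.mem_preimage, ← lfpApprox_bigOrd F] at hu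
      obtain ⟨l, hl, hul⟩ := (mem_lfpApprox_iff F (bigOrd W) u.1).mp hu
      have hrs := muRank_spec (f := F) hul
      have hrOc : muRank F u.1 ∈ Oc K φ₀ w := by
        have hcl := closure_witOrd K φ₀ w
          (show (s, Fml.mu y ψ) ∈ SC φ₀ from ⟨hs, hmem⟩) hκs u.2 hΘ
        exact hcl rfl
      exact claim _ hrOc u hrs.2
  | nu y ψ ih =>
    intro hnn hmem s κs hs hκs hlen
    have hmψ : ψ ∈ subf φ₀ := subf_sub hmem (by simp [subf, self_mem_subf])
    have hbind : (false, y, ψ) ∈ binderAlph φ₀ := mem_binderAlph_nu hmem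
    have hΘ := bigOrd_mem_Oc K φ₀ w
    rw [sat_nu_eq_gfp, sat_nu_eq_gfp]
    set G := opr K ψ (chEnv K (s.zip κs)) y with hG
    set G' := opr (restrK K (Wc K φ₀ w) ⟨w, w_mem_Wc K φ₀ w⟩) ψ
      (fun z => (Subtype.val ⁻¹' chEnv K (s.zip κs) z : Set {a // a ∈ Wc K φ₀ w})) y with hG'
    have key : ∀ κ ∈ Oc K φ₀ w,
        G' (Subtype.val ⁻¹' (gfpApprox G ⊤ κ)) = Subtype.val ⁻¹' (G (gfpApprox G ⊤ κ)) := by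
      intro κ hκ
      have hihκ := ih hnn hmψ ((false, y, ψ) :: s) (κ :: κs)
        (by intro e' he'
            rcases List.mem_cons.mp he' with rfl | h
            · exact hbind
            · exact hs e' h)
        (by intro κ' hκ'
            rcases List.mem_cons.mp hκ' with rfl | h
            · exact hκ
            · exact hκs κ' h)
        (by simpa using hlen)
      simp only [List.zip_cons_cons] at hihκ
      have henv2 : (fun z => (Subtype.val ⁻¹' chEnv K (((false, y, ψ), κ) :: s.zip κs) z :
            Set {a // a ∈ Wc K φ₀ w}))
          = (fun z => if z = y then Subtype.val ⁻¹' (gfpApprox G ⊤ κ)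
              else Subtype.val ⁻¹' chEnv K (s.zip κs) z) := by
        funext z
        by_cases hz : z = y <;> simp [chEnv, stage, hz, ← hG]
      rw [henv2] at hihκ
      exact hihκ
    apply le_antisymm
    · have claim : ∀ κ : Ordinal, κ ∈ Oc K φ₀ w →
          OrderHom.gfp G' ≤ Subtype.val ⁻¹' (gfpApprox G ⊤ κ) := by
        intro κ
        induction κ using Ordinal.induction with
        | h κ ihord =>
          intro hκ u hu
          rw [Set.mem_preimage, mem_gfpApprox_iff]
          by_contra hbad
          push_neg at hbad
          obtain ⟨l, hl, hnot⟩ := hbad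
          have hsp := nuSk_spec (f := G) (κ := κ) ⟨hl, hnot⟩
          have hl'Oc : nuSk G u.1 κ ∈ Oc K φ₀ w := by
            have hcl := closure_witOrd K φ₀ w
              (show (s, Fml.nu y ψ) ∈ SC φ₀ from ⟨hs, hmem⟩) hκs u.2 hκ
            exact hcl rfl
          have hIH := ihord _ hsp.1 hl'Oc
          have h1 : u ∈ G' (OrderHom.gfp G') := by rw [OrderHom.map_gfp]; exact hu
          have h2 := G'.mono hIH h1
          rw [key _ hl'Oc] at h2
          exact hsp.2 h2
      have := claim (bigOrd W) hΘ
      rwa [gfpApprox_bigOrd] at this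
    · apply OrderHom.le_gfp G'
      have heq : Subtype.val ⁻¹' OrderHom.gfp G
          = G' (Subtype.val ⁻¹' (OrderHom.gfp G)) := calc
        Subtype.val ⁻¹' OrderHom.gfp G
            = Subtype.val ⁻¹' (G (OrderHom.gfp G)) := by rw [OrderHom.map_gfp]
        _ = Subtype.val ⁻¹' (G (gfpApprox G ⊤ (bigOrd W))) := by rw [gfpApprox_bigOrd]
        _ = G' (Subtype.val ⁻¹' (gfpApprox G ⊤ (bigOrd W))) := (key _ hΘ).symm
        _ = G' (Subtype.val ⁻¹' (OrderHom.gfp G)) := by rw [gfpApprox_bigOrd]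
      exact le_of_eq heq

/-- Every satisfiable nominal-free sentence has a countable model. -/
theorem exists_countable_model {P N V Pr : Type} (φ : Fml P N V Pr)
    (hnn : φ.NoNom) (hsat : Satisfiable φ) :
    ∃ (W' : Type) (_ : Countable W') (K' : Kripke P N Pr W') (w' : W'), Models K' w' φ := by
  obtain ⟨W, K, w, hM⟩ := hsat
  have hcnt : Countable {a // a ∈ Wc K φ w} := (Wc_countable K φ w).to_subtype
  refine ⟨{a // a ∈ Wc K φ w}, hcnt,
    restrK K (Wc K φ w) ⟨w, w_mem_Wc K φ w⟩, ⟨w, w_mem_Wc K φ w⟩, ?_⟩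
  have hmain := main_restrict K φ w φ hnn (self_mem_subf φ) [] [] (by simp) (by simp) rfl
  have henv : (fun z : V => (Subtype.val ⁻¹' chEnv K
        (List.zip ([] : List (Bool × V × Fml P N V Pr)) ([] : List Ordinal)) z :
      Set {a // a ∈ Wc K φ w})) = (fun _ : V => (∅ : Set {a // a ∈ Wc K φ w})) := by
    funext z
    simp [chEnv]
  rw [henv] at hmain
  show _ ∈ (restrK K (Wc K φ w) _).sat φ _
  rw [hmain]
  exact hM

end AuxMain
section AuxTree

open Classical

variable {P N V Pr : Type}

/-- Inverse of a program. -/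
def pinv {Pr : Type} : Prg Pr → Prg Pr
  | .atom a => .inv a
  | .inv a => .atom a

theorem pinv_pinv (α : Prg Pr) : pinv (pinv α) = α := by cases α <;> rfl

theorem rel_pinv {W : Type} (K : Kripke P N Pr W) (α : Prg Pr) (u v : W) :
    K.rel (pinv α) u v ↔ K.rel α v u := by cases α <;> exact Iff.rfl

theorem prgs_finite (φ : Fml P N V Pr) : φ.prgs.Finite := by
  induction φ with
  | or a b iha ihb => exact iha.union ihb
  | and a b iha ihb => exact iha.union ihb
  | atleast n α a ih => exact ih.insert α
  | allbut n α a ih => exact ih.insert α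
  | mu y a ih => exact ih
  | nu y a ih => exact ih
  | tt => exact Set.finite_empty
  | ff => exact Set.finite_empty
  | prop p => exact Set.finite_empty
  | nprop p => exact Set.finite_empty
  | nom o => exact Set.finite_empty
  | nnom o => exact Set.finite_empty
  | var x => exact Set.finite_empty

/-- Programs relevant to a formula, closed under inverse. -/
def relSet (φ : Fml P N V Pr) : Set (Prg Pr) := φ.prgs ∪ pinv '' φ.prgs

theorem relSet_finite (φ : Fml P N V Pr) : (relSet φ).Finite :=
  (prgs_finite φ).union ((prgs_finite φ).image pinv)

theorem prgs_sub_relSet (φ : Fml P N V Pr) : φ.prgs ⊆ relSet φ := Set.subset_union_left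

theorem pinv_mem_relSet {φ : Fml P N V Pr} {α : Prg Pr} (h : α ∈ relSet φ) :
    pinv α ∈ relSet φ := by
  rcases h with h | ⟨β, hβ, rfl⟩
  · exact Or.inr ⟨α, h, rfl⟩
  · rw [pinv_pinv]; exact Or.inl hβ

variable {W' : Type}

/-- The state reached along a path (given in reverse order, innermost letter first). -/
noncomputable def stR (K' : Kripke P N Pr W') (w' : W') (dec : ℕ → Option (Prg Pr × W')) :
    List ℕ → Option W'
  | [] => none
  | [c] => if c = 0 then some w' else none
  | c :: c' :: r =>
    match stR K' w' dec (c' :: r), dec c with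
    | some u, some (α, v) =>
      if K'.rel α u v ∧
          ¬ (∃ p', dec c' = some p' ∧ α = pinv p'.1 ∧ stR K' w' dec r = some v)
        then some v else none
    | _, _ => none
termination_by l => l.length

theorem stR_cons_cons (K' : Kripke P N Pr W') (w' : W') (dec : ℕ → Option (Prg Pr × W'))
    (c c' : ℕ) (r : List ℕ) (v : W') :
    stR K' w' dec (c :: c' :: r) = some v ↔
      ∃ u α, stR K' w' dec (c' :: r) = some u ∧ dec c = some (α, v) ∧ K'.rel α u v ∧
        ¬ (∃ p', dec c' = some p' ∧ α = pinv p'.1 ∧ stR K' w' dec r = some v) := by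
  rw [stR]
  rcases h1 : stR K' w' dec (c' :: r) with _ | u
  · simp
  · rcases h2 : dec c with _ | ⟨α, v'⟩
    · simp
    · simp only []
      split_ifs with hc
      · constructor
        · rintro h
          have hv : v' = v := by injection h
          subst hv
          exact ⟨u, α, rfl, rfl, hc.1, hc.2⟩
        · rintro ⟨u2, α2, hu2, hd2, hrel2, hnex2⟩
          injection hd2 with h'
          rw [Prod.mk.injEq] at h'
          obtain ⟨rfl, rfl⟩ := h'
          rfl
      · constructor
        · intro h; exact absurd h (by simp)
        · rintro ⟨u2, α2, hu2, hd2, hrel2, hnex2⟩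
          exfalso
          injection hu2 with hu2
          subst hu2
          injection hd2 with h'
          rw [Prod.mk.injEq] at h'
          obtain ⟨rfl, rfl⟩ := h'
          exact hc ⟨hrel2, hnex2⟩

theorem stR_single (K' : Kripke P N Pr W') (w' : W') (dec : ℕ → Option (Prg Pr × W'))
    (c : ℕ) : stR K' w' dec [c] = if c = 0 then some w' else none := by
  rw [stR]

theorem stR_nil (K' : Kripke P N Pr W') (w' : W') (dec : ℕ → Option (Prg Pr × W')) :
    stR K' w' dec [] = none := by
  rw [stR]

theorem stR_getLast {K' : Kripke P N Pr W'} {w' : W'} {dec : ℕ → Option (Prg Pr × W')} :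
    ∀ (r : List ℕ) (v : W'), stR K' w' dec r = some v → r.getLast? = some 0 := by
  have H : ∀ (n : ℕ) (r : List ℕ), r.length ≤ n → ∀ v, stR K' w' dec r = some v →
      r.getLast? = some 0 := by
    intro n
    induction n with
    | zero =>
      intro r hr v h
      rw [List.length_eq_zero_iff.mp (Nat.le_zero.mp hr)] at h
      rw [stR_nil] at h
      exact absurd h (by simp)
    | succ n ih =>
      intro r hr v h
      rcases r with _ | ⟨c, _ | ⟨c', r'⟩⟩
      · rw [stR_nil] at h; exact absurd h (by simp)
      · rw [stR_single] at h
        split_ifs at h with hc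
        subst hc; rfl
      · obtain ⟨u, α, hu, _⟩ := (stR_cons_cons K' w' dec c c' r' v).mp h
        have := ih (c' :: r') (by simp at hr ⊢; omega) u hu
        rwa [List.getLast?_cons_cons]
  exact fun r v h => H r.length r le_rfl v h

end AuxTree
section AuxTree2

open Classical

variable {P N V Pr W' : Type}

/-- The tree of valid paths. -/
def TS (K' : Kripke P N Pr W') (w' : W') (dec : ℕ → Option (Prg Pr × W')) : Set Node :=
  {x | (stR K' w' dec x.reverse).isSome}

noncomputable def piT (K' : Kripke P N Pr W') (w' : W') (dec : ℕ → Option (Prg Pr × W'))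
    (x : {a : Node // a ∈ TS K' w' dec}) : W' :=
  (stR K' w' dec x.1.reverse).get x.2

theorem piT_spec (K' : Kripke P N Pr W') (w' : W') (dec : ℕ → Option (Prg Pr × W'))
    (x : {a : Node // a ∈ TS K' w' dec}) :
    stR K' w' dec x.1.reverse = some (piT K' w' dec x) :=
  (Option.some_get x.2).symm

theorem root_mem_TS (K' : Kripke P N Pr W') (w' : W') (dec : ℕ → Option (Prg Pr × W')) :
    [0] ∈ TS K' w' dec := by
  show (stR K' w' dec [0].reverse).isSome
  simp [stR_single]

theorem piT_root (K' : Kripke P N Pr W') (w' : W') (dec : ℕ → Option (Prg Pr × W')) :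
    piT K' w' dec ⟨[0], root_mem_TS K' w' dec⟩ = w' := by
  have h := piT_spec K' w' dec ⟨[0], root_mem_TS K' w' dec⟩
  rw [show (([0] : Node)).reverse = [0] from rfl, stR_single, if_pos rfl] at h
  injection h with h
  exact h.symm

theorem TS_ne_nil {K' : Kripke P N Pr W'} {w' : W'} {dec : ℕ → Option (Prg Pr × W')}
    {x : Node} (hx : x ∈ TS K' w' dec) : x ≠ [] := by
  intro h
  subst h
  have h2 : (stR K' w' dec ([] : Node).reverse).isSome := hx
  rw [List.reverse_nil, stR_nil] at h2
  simp at h2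

theorem TS_reverse_cons {K' : Kripke P N Pr W'} {w' : W'} {dec : ℕ → Option (Prg Pr × W')}
    {x : Node} (hx : x ∈ TS K' w' dec) : ∃ c r, x.reverse = c :: r := by
  rcases h : x.reverse with _ | ⟨c, r⟩
  · exact absurd (by simpa using congrArg List.reverse h) (TS_ne_nil hx)
  · exact ⟨c, r, rfl⟩

/-- The tree Kripke structure. -/
noncomputable def treeK (K' : Kripke P N Pr W') (w' : W') (dec : ℕ → Option (Prg Pr × W')) :
    Kripke P N Pr {a : Node // a ∈ TS K' w' dec} :=
  { ne := ⟨⟨[0], root_mem_TS K' w' dec⟩⟩,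
    R := fun a x y =>
      (∃ c v, y.1 = x.1 ++ [c] ∧ dec c = some (Prg.atom a, v)) ∨
      (∃ c v, x.1 = y.1 ++ [c] ∧ dec c = some (Prg.inv a, v)),
    L := fun p => {x | piT K' w' dec x ∈ K'.L p},
    nomVal := fun _ => ⟨[0], root_mem_TS K' w' dec⟩ }

theorem treeK_rel (K' : Kripke P N Pr W') (w' : W') (dec : ℕ → Option (Prg Pr × W'))
    (α : Prg Pr) (x y : {a : Node // a ∈ TS K' w' dec}) :
    (treeK K' w' dec).rel α x y ↔
      (∃ c v, y.1 = x.1 ++ [c] ∧ dec c = some (α, v)) ∨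
      (∃ c v, x.1 = y.1 ++ [c] ∧ dec c = some (pinv α, v)) := by
  cases α
  · exact Iff.rfl
  · exact or_comm

theorem child_valid {K' : Kripke P N Pr W'} {w' : W'} {dec : ℕ → Option (Prg Pr × W')}
    (x y : {a : Node // a ∈ TS K' w' dec}) {c : ℕ} (hxy : y.1 = x.1 ++ [c])
    {c' : ℕ} {r : List ℕ} (hxr : x.1.reverse = c' :: r) :
    ∃ α, dec c = some (α, piT K' w' dec y) ∧
      K'.rel α (piT K' w' dec x) (piT K' w' dec y) ∧
      ¬ (∃ p', dec c' = some p' ∧ α = pinv p'.1 ∧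
          stR K' w' dec r = some (piT K' w' dec y)) := by
  have hyr : y.1.reverse = c :: c' :: r := by
    rw [hxy, List.reverse_append, List.reverse_singleton, List.singleton_append, hxr]
  have hy := piT_spec K' w' dec y
  rw [hyr] at hy
  obtain ⟨u, α, hu, hdec, hrel, hnex⟩ := (stR_cons_cons K' w' dec c c' r _).mp hy
  have hx := piT_spec K' w' dec x
  rw [hxr, hu] at hx
  injection hx with hx
  rw [hx] at hrel
  exact ⟨α, hdec, hrel, hnex⟩

theorem child_mem {K' : Kripke P N Pr W'} {w' : W'} {dec : ℕ → Option (Prg Pr × W')}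
    (x : {a : Node // a ∈ TS K' w' dec}) {c' : ℕ} {r : List ℕ} (hxr : x.1.reverse = c' :: r)
    {c : ℕ} {α : Prg Pr} {v : W'} (hdec : dec c = some (α, v))
    (hrel : K'.rel α (piT K' w' dec x) v)
    (hnex : ¬ (∃ p', dec c' = some p' ∧ α = pinv p'.1 ∧ stR K' w' dec r = some v)) :
    stR K' w' dec (x.1 ++ [c]).reverse = some v := by
  have hyr : (x.1 ++ [c]).reverse = c :: c' :: r := by
    rw [List.reverse_append, List.reverse_singleton, List.singleton_append, hxr]
  rw [hyr]
  refine (stR_cons_cons K' w' dec c c' r v).mpr ⟨piT K' w' dec x, α, ?_, hdec, hrel, hnex⟩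
  rw [← hxr]
  exact piT_spec K' w' dec x

end AuxTree2
section AuxTree3

open Classical

variable {P N V Pr W' : Type}
variable {K' : Kripke P N Pr W'} {w' : W'} {dec : ℕ → Option (Prg Pr × W')}

theorem treeB1 (α : Prg Pr) (x y : {a : Node // a ∈ TS K' w' dec})
    (h : (treeK K' w' dec).rel α x y) :
    K'.rel α (piT K' w' dec x) (piT K' w' dec y) := by
  rw [treeK_rel] at h
  rcases h with ⟨c, v, hxy, hdec⟩ | ⟨c, v, hxy, hdec⟩
  · obtain ⟨c', r, hxr⟩ := TS_reverse_cons x.2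
    obtain ⟨α₂, hdec₂, hrel, -⟩ := child_valid x y hxy hxr
    rw [hdec] at hdec₂
    injection hdec₂ with h'
    rw [Prod.mk.injEq] at h'
    obtain ⟨h1, -⟩ := h'
    rwa [← h1] at hrel
  · obtain ⟨c', r, hyr⟩ := TS_reverse_cons y.2
    obtain ⟨α₂, hdec₂, hrel, -⟩ := child_valid y x hxy hyr
    rw [hdec] at hdec₂
    injection hdec₂ with h'
    rw [Prod.mk.injEq] at h'
    obtain ⟨h1, -⟩ := h'
    rw [← h1] at hrel
    exact (rel_pinv K' α _ _).mp hrel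

theorem treeB2 (Hdec2 : ∀ c₁ c₂ p, dec c₁ = some p → dec c₂ = some p → c₁ = c₂)
    (α : Prg Pr) (x : {a : Node // a ∈ TS K' w' dec}) :
    Set.InjOn (piT K' w' dec) {y | (treeK K' w' dec).rel α x y} := by
  intro y₁ h₁ y₂ h₂ heq
  rw [Set.mem_setOf_eq, treeK_rel] at h₁ h₂
  obtain ⟨c', r, hxr⟩ := TS_reverse_cons x.2
  rcases h₁ with ⟨c₁, v₁, hx1, hd1⟩ | ⟨c₁, v₁, hx1, hd1⟩ <;>
    rcases h₂ with ⟨c₂, v₂, hx2, hd2⟩ | ⟨c₂, v₂, hx2, hd2⟩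
  · -- both children
    obtain ⟨α₁, hdec₁, -, -⟩ := child_valid x y₁ hx1 hxr
    obtain ⟨α₂, hdec₂, -, -⟩ := child_valid x y₂ hx2 hxr
    rw [hd1] at hdec₁
    injection hdec₁ with h1'
    rw [Prod.mk.injEq] at h1'
    rw [hd2] at hdec₂
    injection hdec₂ with h2'
    rw [Prod.mk.injEq] at h2'
    have hc : c₁ = c₂ := by
      refine Hdec2 c₁ c₂ (α, piT K' w' dec y₁) ?_ ?_
      · rw [hd1]; rw [h1'.2]
      · rw [hd2, h2'.2, heq]
    apply Subtype.ext
    rw [hx1, hx2, hc]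
  · -- y₁ child, y₂ parent : contradiction via the exclusion condition
    exfalso
    have hxr2 : x.1.reverse = c₂ :: y₂.1.reverse := by
      rw [hx2, List.reverse_append, List.reverse_singleton, List.singleton_append]
    obtain ⟨α₁, hdec₁, -, hnex₁⟩ := child_valid x y₁ hx1 hxr2
    have hα₁ : α₁ = α := by
      rw [hd1] at hdec₁
      injection hdec₁ with h'
      rw [Prod.mk.injEq] at h'
      exact h'.1.symm
    refine hnex₁ ⟨(pinv α, v₂), hd2, ?_, ?_⟩
    · rw [hα₁, pinv_pinv]
    · rw [heq]
      exact piT_spec K' w' dec y₂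
  · -- y₁ parent, y₂ child : symmetric
    exfalso
    have hxr1 : x.1.reverse = c₁ :: y₁.1.reverse := by
      rw [hx1, List.reverse_append, List.reverse_singleton, List.singleton_append]
    obtain ⟨α₂, hdec₂, -, hnex₂⟩ := child_valid x y₂ hx2 hxr1
    have hα₂ : α₂ = α := by
      rw [hd2] at hdec₂
      injection hdec₂ with h'
      rw [Prod.mk.injEq] at h'
      exact h'.1.symm
    refine hnex₂ ⟨(pinv α, v₁), hd1, ?_, ?_⟩
    · rw [hα₂, pinv_pinv]
    · rw [← heq]
      exact piT_spec K' w' dec y₁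
  · -- both parents
    have h' : c₁ :: y₁.1.reverse = c₂ :: y₂.1.reverse := by
      have h12 := hx1.symm.trans hx2
      have h13 := congrArg List.reverse h12
      rwa [List.reverse_append, List.reverse_append, List.reverse_singleton,
        List.reverse_singleton, List.singleton_append, List.singleton_append] at h13
    injection h' with hc hr
    exact Subtype.ext (List.reverse_injective hr)

theorem treeB3 {RS : Set (Prg Pr)}
    (Hdec3 : ∀ (α : Prg Pr) (v : W'), α ∈ RS → ∃ c, dec c = some (α, v))
    (α : Prg Pr) (hα : α ∈ RS) (x : {a : Node // a ∈ TS K' w' dec}) (v : W')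
    (hrel : K'.rel α (piT K' w' dec x) v) :
    ∃ y, (treeK K' w' dec).rel α x y ∧ piT K' w' dec y = v := by
  obtain ⟨c', r, hxr⟩ := TS_reverse_cons x.2
  by_cases hexc : ∃ p', dec c' = some p' ∧ α = pinv p'.1 ∧ stR K' w' dec r = some v
  · obtain ⟨⟨β, u₂⟩, hdc', hαp, hstr⟩ := hexc
    have hstr' : stR K' w' dec r.reverse.reverse = some v := by
      rwa [List.reverse_reverse]
    have hyT : r.reverse ∈ TS K' w' dec := by
      show (stR K' w' dec r.reverse.reverse).isSome
      rw [hstr']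
      rfl
    have hx1 : x.1 = r.reverse ++ [c'] := by
      have h2 := congrArg List.reverse hxr
      rw [List.reverse_reverse] at h2
      rw [h2, List.reverse_cons]
    refine ⟨⟨r.reverse, hyT⟩, ?_, ?_⟩
    · rw [treeK_rel]
      right
      refine ⟨c', u₂, hx1, ?_⟩
      have hβ : β = pinv α := by rw [hαp, pinv_pinv]
      rw [← hβ]
      exact hdc'
    · have hp := piT_spec K' w' dec ⟨r.reverse, hyT⟩
      rw [show (⟨r.reverse, hyT⟩ : {a : Node // a ∈ TS K' w' dec}).1.reverse
        = r.reverse.reverse from rfl, hstr'] at hp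
      injection hp with hp
      exact hp.symm
  · obtain ⟨c, hdec⟩ := Hdec3 α v hα
    have hmem := child_mem x hxr hdec hrel hexc
    have hyT : (x.1 ++ [c]) ∈ TS K' w' dec := by
      show (stR K' w' dec (x.1 ++ [c]).reverse).isSome
      rw [hmem]
      rfl
    refine ⟨⟨x.1 ++ [c], hyT⟩, ?_, ?_⟩
    · rw [treeK_rel]
      exact Or.inl ⟨c, v, rfl, hdec⟩
    · have hp := piT_spec K' w' dec ⟨x.1 ++ [c], hyT⟩
      rw [show (⟨x.1 ++ [c], hyT⟩ : {a : Node // a ∈ TS K' w' dec}).1 = x.1 ++ [c] from rfl,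
        hmem] at hp
      injection hp with hp
      exact hp.symm

end AuxTree3
section AuxTree4

open Classical

variable {P N V Pr W' : Type}
variable {K' : Kripke P N Pr W'} {w' : W'} {dec : ℕ → Option (Prg Pr × W')}

theorem TS_forest : IsForest (TS K' w' dec) := by
  constructor
  · exact fun x hx => TS_ne_nil hx
  · rintro x y hy ⟨c, rfl⟩ hne
    rcases hxr : x.reverse with _ | ⟨c'', r'⟩
    · exact absurd (by simpa using congrArg List.reverse hxr) hne
    · have hyr : (x ++ [c]).reverse = c :: c'' :: r' := by
        rw [List.reverse_append, List.reverse_singleton, List.singleton_append, hxr]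
      have hy2 : (stR K' w' dec ((x ++ [c]).reverse)).isSome := hy
      rw [hyr] at hy2
      obtain ⟨v, hv⟩ := Option.isSome_iff_exists.mp hy2
      obtain ⟨u, α, hu, -⟩ := (stR_cons_cons K' w' dec c c'' r' v).mp hv
      show (stR K' w' dec x.reverse).isSome
      rw [hxr, hu]
      rfl

theorem TS_tree : IsTree (TS K' w' dec) := by
  refine ⟨TS_forest, ⟨[0], root_mem_TS K' w' dec⟩, 0, ?_⟩
  intro x hx
  obtain ⟨v, hv⟩ := Option.isSome_iff_exists.mp hx
  have h := stR_getLast x.reverse v hv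
  rwa [List.getLast?_reverse] at h

theorem TS_structure : ∀ x y : {a : Node // a ∈ TS K' w' dec},
    (∃ α : Prg Pr, (treeK K' w' dec).rel α x y) ↔
      (IsChild x.val y.val ∨ IsChild y.val x.val) := by
  intro x y
  constructor
  · rintro ⟨α, hα⟩
    rw [treeK_rel] at hα
    rcases hα with ⟨c, v, hxy, -⟩ | ⟨c, v, hxy, -⟩
    · exact Or.inl ⟨c, hxy⟩
    · exact Or.inr ⟨c, hxy⟩
  · rintro (⟨c, hxy⟩ | ⟨c, hyx⟩)
    · obtain ⟨c', r, hxr⟩ := TS_reverse_cons x.2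
      obtain ⟨α, hdec, -, -⟩ := child_valid x y hxy hxr
      exact ⟨α, (treeK_rel K' w' dec α x y).mpr (Or.inl ⟨c, piT K' w' dec y, hxy, hdec⟩)⟩
    · obtain ⟨c', r, hyr⟩ := TS_reverse_cons y.2
      obtain ⟨α, hdec, -, -⟩ := child_valid y x hyx hyr
      refine ⟨pinv α, (treeK_rel K' w' dec (pinv α) x y).mpr (Or.inr ⟨c, piT K' w' dec x, hyx, ?_⟩)⟩
      rwa [pinv_pinv]

/-- From a countable model to a tree model. -/
theorem exists_tree_model {P N V Pr : Type} (φ : Fml P N V Pr) (hnn : φ.NoNom)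
    (W' : Type) (hc : Countable W') (K' : Kripke P N Pr W') (w' : W') (hM : Models K' w' φ) :
    ∃ (T : Set Node) (K : Kripke P N Pr {x : Node // x ∈ T}) (c₀ : {x : Node // x ∈ T}),
      IsTreeStructure T K ∧ IsRootNode c₀.val ∧ Models K c₀ φ := by
  haveI : Countable {α : Prg Pr // α ∈ relSet φ} := (relSet_finite φ).countable.to_subtype
  haveI : Countable W' := hc
  obtain ⟨f, hf⟩ := exists_injective_nat ({α : Prg Pr // α ∈ relSet φ} × W')
  set dec : ℕ → Option (Prg Pr × W') := fun c =>
    if h : ∃ a : {α : Prg Pr // α ∈ relSet φ} × W', f a = c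
      then some (h.choose.1.1, h.choose.2) else none with hdec
  have Hdec2 : ∀ c₁ c₂ p, dec c₁ = some p → dec c₂ = some p → c₁ = c₂ := by
    intro c₁ c₂ p h1 h2
    rw [hdec] at h1 h2
    dsimp only at h1 h2
    split_ifs at h1 h2 with hx1 hx2
    injection h1 with h1
    injection h2 with h2
    have he : hx1.choose = hx2.choose := by
      refine Prod.ext (Subtype.ext ?_) ?_
      · have e1 := congrArg Prod.fst h1
        have e2 := congrArg Prod.fst h2
        simp only at e1 e2
        rw [e1, ← e2]
      · have e1 := congrArg Prod.snd h1
        have e2 := congrArg Prod.snd h2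
        simp only at e1 e2
        rw [e1, ← e2]
    rw [← hx1.choose_spec, ← hx2.choose_spec, he]
  have Hdec3 : ∀ (α : Prg Pr) (v : W'), α ∈ relSet φ → ∃ c, dec c = some (α, v) := by
    intro α v hα
    refine ⟨f (⟨α, hα⟩, v), ?_⟩
    rw [hdec]
    dsimp only
    have hex : ∃ a : {α : Prg Pr // α ∈ relSet φ} × W', f a = f (⟨α, hα⟩, v) := ⟨_, rfl⟩
    rw [dif_pos hex]
    have := hf hex.choose_spec
    rw [this]
  refine ⟨TS K' w' dec, treeK K' w' dec, ⟨[0], root_mem_TS K' w' dec⟩,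
    ⟨TS_tree, TS_structure⟩, rfl, ?_⟩
  have htr := sat_transfer (treeK K' w' dec) K' (piT K' w' dec) (relSet φ)
    (fun p => rfl) (fun α _ x y h => treeB1 α x y h) (fun α _ x => treeB2 Hdec2 α x)
    (fun α hα x v h => treeB3 Hdec3 α hα x v h) φ hnn (prgs_sub_relSet φ) (fun _ => ∅)
  have henv : (fun z : V => piT K' w' dec ⁻¹' (∅ : Set W'))
      = (fun _ : V => (∅ : Set {a : Node // a ∈ TS K' w' dec})) := by
    funext z
    simp
  rw [henv] at htr
  show _ ∈ (treeK K' w' dec).sat φ (fun _ => ∅)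
  rw [htr]
  show piT K' w' dec _ ∈ K'.sat φ (fun _ => ∅)
  rw [piT_root]
  exact hM

end AuxTree4
/-- **Theorem 1 (tree model property).** If a sentence of the full graded μ-calculus
(no nominals) is satisfiable, then it has a tree model: a tree structure whose root
satisfies the sentence. -/
theorem full_graded_mu_calculus_tree_model_property
    {P N V Pr : Type} (φ : Fml P N V Pr)
    (hsen : φ.IsSentence) (hfrag : φ.NoNom) (hsat : Satisfiable φ) :
    ∃ (T : Set Node) (K : Kripke P N Pr {x : Node // x ∈ T}) (c₀ : {x : Node // x ∈ T}),
      IsTreeStructure T K ∧ IsRootNode c₀.val ∧ Models K c₀ φ := by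
  obtain ⟨W', hc, K', w', hM⟩ := exists_countable_model φ hfrag hsat
  exact exists_tree_model φ hfrag W' hc K' w' hM
end

section
/- Given a ForAll GNPT A₁ with n₁ states and index k₁, and a Safety GNPT A₂ with n₂ states and counting bound b₂, both over the same alphabet Σ, there exists a GNPT A with n₁·n₂ states, index k₁, and counting bound b₂ such that L(A) = L(A₁) ∩ L(A₂). -/
/-! ### Fully enriched automata and two-way graded alternating parity tree automata -/

/-- Positive Boolean formulas over atoms of type `X`. -/
inductive PosBool (X : Type) where
  | tru
  | fls
  | atom (x : X)
  | and (f g : PosBool X)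
  | or (f g : PosBool X)

namespace PosBool

variable {X : Type}

/-- A set of atoms satisfies a positive Boolean formula. -/
def sats (S : Set X) : PosBool X → Prop
  | .tru => True
  | .fls => False
  | .atom x => x ∈ S
  | .and f g => f.sats S ∧ g.sats S
  | .or f g => f.sats S ∨ g.sats S

/-- All atoms occurring in a positive Boolean formula satisfy `p`. -/
def All (p : X → Prop) : PosBool X → Prop
  | .tru => True
  | .fls => True
  | .atom x => p x
  | .and f g => f.All p ∧ g.All p
  | .or f g => f.All p ∧ g.All p

end PosBool

/-- Moves of a fully enriched automaton: `⟨n⟩`, `[n]`, `−1`, `ε`, `⟨root⟩`, `[root]`. -/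
inductive Mv where
  | dia (n : ℕ)
  | box (n : ℕ)
  | up
  | stay
  | someRoot
  | allRoots

/-- The counting parameter of a move is bounded by `b`. -/
def Mv.Bounded (b : ℕ) : Mv → Prop
  | .dia n => n ≤ b
  | .box n => n ≤ b
  | _ => True

/-- Two-way moves (no jumps to roots): the moves in `D_b⁻`. -/
def Mv.TwoWay : Mv → Prop
  | .someRoot => False
  | .allRoots => False
  | _ => True

/-- A fully enriched automaton (FEA) over the alphabet `A` with state type `Q`:
counting bound `b > 0`, transition function `δ : Q × A → B⁺(D_b × Q)`, initial state,
and a parity condition `F₁ ⊆ … ⊆ F_k = Q` of index `k`. -/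
structure FEA (A Q : Type) where
  finQ : Finite Q
  b : ℕ
  hb : 0 < b
  δ : Q → A → PosBool (Mv × Q)
  hδ : ∀ q a, (δ q a).All (fun m => m.1.Bounded b)
  init : Q
  k : ℕ
  hk : 0 < k
  F : Fin k → Set Q
  Fmono : Monotone F
  Flast : ∀ (q : Q) (h : k - 1 < k), q ∈ F ⟨k - 1, h⟩

/-- The roots of a forest. -/
def rootsOf (F : Set Node) : Set Node := {x ∈ F | x.length = 1}

/-- Executing a single atom `(d, s)` of a transition at the run node `y`
(currently reading the input node `x`). -/
def ExecOK {Q : Type} (Fo : Set Node) (Tr : Set Node) (r : Node → Node × Q)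
    (y x : Node) : Mv × Q → Prop
  | (.stay, s) => ∃ j : ℕ, y ++ [j] ∈ Tr ∧ r (y ++ [j]) = (x, s)
  | (.up, s) => 1 < x.length ∧ ∃ j : ℕ, y ++ [j] ∈ Tr ∧ r (y ++ [j]) = (x.dropLast, s)
  | (.dia n, s) => ∃ M : Finset ℕ, M.card = n + 1 ∧
      ∀ c ∈ M, x ++ [c] ∈ Fo ∧ ∃ j : ℕ, y ++ [j] ∈ Tr ∧ r (y ++ [j]) = (x ++ [c], s)
  | (.box n, s) => ∃ M : Finset ℕ, M.card ≤ n ∧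
      ∀ c : ℕ, x ++ [c] ∈ Fo → c ∉ M →
        ∃ j : ℕ, y ++ [j] ∈ Tr ∧ r (y ++ [j]) = (x ++ [c], s)
  | (.someRoot, s) => ∃ cr ∈ rootsOf Fo, ∃ j : ℕ, y ++ [j] ∈ Tr ∧ r (y ++ [j]) = (cr, s)
  | (.allRoots, s) => ∀ cr ∈ rootsOf Fo, ∃ j : ℕ, y ++ [j] ∈ Tr ∧ r (y ++ [j]) = (cr, s)

/-- A run `⟨T_r, r⟩` of a FEA on the labeled forest `⟨Fo, V⟩`. -/
structure FEA.IsRun {A Q : Type} (M : FEA A Q) (Fo : Set Node) (V : Node → A)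
    (Tr : Set Node) (r : Node → Node × Q) : Prop where
  tree : IsTree Tr
  start : ∀ z ∈ Tr, z.length = 1 → (r z).1 ∈ rootsOf Fo ∧ (r z).2 = M.init
  step : ∀ y ∈ Tr, ∃ S : Set (Mv × Q),
      (M.δ (r y).2 (V (r y).1)).sats S ∧ ∀ ds ∈ S, ExecOK Fo Tr r y (r y).1 ds

/-- An infinite path of the tree `Tr` starting at its root. -/
def IsInfPath (Tr : Set Node) (p : ℕ → Node) : Prop :=
  p 0 ∈ Tr ∧ (p 0).length = 1 ∧ ∀ i : ℕ, p (i + 1) ∈ Tr ∧ IsChild (p i) (p (i + 1))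

/-- `ParityOK k F I`: the minimal (1-based) index `i` with `I ∩ F_i ≠ ∅` is even
(the zero-based index is odd). -/
def ParityOK {Q : Type} (k : ℕ) (F : Fin k → Set Q) (I : Set Q) : Prop :=
  ∃ j : Fin k, (I ∩ F j).Nonempty ∧ Odd j.val ∧
    ∀ j' : Fin k, (I ∩ F j').Nonempty → j ≤ j'

/-- The set of states occurring infinitely often along a path of a run. -/
def InfStates {Q : Type} (r : Node → Node × Q) (p : ℕ → Node) : Set Q :=
  {q | ∀ n : ℕ, ∃ i : ℕ, n ≤ i ∧ (r (p i)).2 = q}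

/-- Acceptance of a labeled forest by a FEA. -/
def FEA.Accepts {A Q : Type} (M : FEA A Q) (Fo : Set Node) (V : Node → A) : Prop :=
  ∃ (Tr : Set Node) (r : Node → Node × Q),
    M.IsRun Fo V Tr r ∧
    ∀ p : ℕ → Node, IsInfPath Tr p → ParityOK M.k M.F (InfStates r p)

/-- A two-way graded alternating parity tree automaton (2GAPT): a FEA that runs on
trees and uses only the moves in `D_b⁻` (no jumps to roots). -/
structure GAPT2 (A Q : Type) extends FEA A Q where
  htw : ∀ q a, (δ q a).All (fun m => m.1.TwoWay)

/-- Acceptance of a labeled tree by a 2GAPT (a tree being a forest with a single root,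
the run conditions are those of FEAs). -/
def GAPT2.Accepts {A Q : Type} (M : GAPT2 A Q) (T : Set Node) (V : Node → A) : Prop :=
  M.toFEA.Accepts T V
/-! ### Graded nondeterministic parity tree automata (GNPTs) -/

/-- Boolean formulas over variables of type `Y`. -/
inductive BForm (Y : Type) where
  | tru
  | fls
  | var (y : Y)
  | not (f : BForm Y)
  | and (f g : BForm Y)
  | or (f g : BForm Y)

/-- A subset of `Y` (a letter of `2^Y`) satisfies a Boolean formula. -/
def BForm.holds {Y : Type} (s : Set Y) : BForm Y → Prop
  | .tru => True
  | .fls => False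
  | .var y => y ∈ s
  | .not f => ¬ f.holds s
  | .and f g => f.holds s ∧ g.holds s
  | .or f g => f.holds s ∨ g.holds s

/-- A constraint pair `⟨θ, ξ⟩`: a Boolean formula together with a bound
`(>, n)` (encoded `(true, n)`) or `(≤, n)` (encoded `(false, n)`). -/
abbrev CPair (Y : Type) := BForm Y × Bool × ℕ

/-- A `b`-counting constraint: a finite set (list) of constraint pairs. -/
abbrev CConstr (Y : Type) := List (CPair Y)

/-- A word, given by an index set `I` and letters `f i ∈ 2^Y` for `i ∈ I`,
satisfies a constraint pair. (Only the number of occurrences of letters satisfying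
`θ` matters, not their order.) -/
def CPairSat {ι Y : Type} (I : Set ι) (f : ι → Set Y) : CPair Y → Prop
  | (θ, true, n) => CardGT {i ∈ I | θ.holds (f i)} n
  | (θ, false, n) => CardLE {i ∈ I | θ.holds (f i)} n

/-- A word satisfies a counting constraint if it satisfies every pair in it. -/
def CSat {ι Y : Type} (I : Set ι) (f : ι → Set Y) (C : CConstr Y) : Prop :=
  ∀ p ∈ C, CPairSat I f p

/-- A graded nondeterministic parity tree automaton (GNPT) over the alphabet `A`:
the states form a finite set `Q ⊆ 2^Y` for a finite variable set `Y`, the transition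
function maps a state and a letter to a `b`-counting constraint of cardinality at most
`log |Q|`, and acceptance is by a parity condition `F₁ ⊆ … ⊆ F_k`. -/
structure GNPT (A Y : Type) where
  finY : Finite Y
  b : ℕ
  Q : Set (Set Y)
  finQ : Q.Finite
  δ : Set Y → A → CConstr Y
  hb : ∀ q ∈ Q, ∀ a, ∀ p ∈ δ q a, p.2.2 ≤ b
  hsize : ∀ q ∈ Q, ∀ a, (δ q a).length ≤ Nat.log 2 (Nat.card Q)
  init : Set Y
  hinit : init ∈ Q
  k : ℕ
  F : Fin k → Set (Set Y)
  Fmono : Monotone F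

namespace GNPT

variable {A Y : Type}

/-- A run of a GNPT on a labeled tree `⟨T, V⟩`: a `Q`-labeling `r` of the same tree `T`
such that the root is labeled by the initial state and, at every node, the word of
labels of its successors satisfies the corresponding counting constraint. -/
def IsRun (M : GNPT A Y) (T : Set Node) (V : Node → A) (r : Node → Set Y) : Prop :=
  (∀ x ∈ T, r x ∈ M.Q) ∧
  (∀ x ∈ T, x.length = 1 → r x = M.init) ∧
  ∀ x ∈ T, CSat {c : ℕ | x ++ [c] ∈ T} (fun c => r (x ++ [c])) (M.δ (r x) (V x))

/-- Acceptance of a labeled tree by a GNPT. -/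
def Accepts (M : GNPT A Y) (T : Set Node) (V : Node → A) : Prop :=
  ∃ r : Node → Set Y, M.IsRun T V r ∧
    ∀ p : ℕ → Node, IsInfPath T p →
      ParityOK M.k M.F {s | ∀ n : ℕ, ∃ i : ℕ, n ≤ i ∧ r (p i) = s}

/-- The language of a GNPT is empty: it accepts no labeled tree. -/
def LEmpty (M : GNPT A Y) : Prop :=
  ¬ ∃ (T : Set Node) (V : Node → A), IsTree T ∧ M.Accepts T V

/-- A `Forall` GNPT: every transition requires all successors to carry one
designated state. -/
def IsForall (M : GNPT A Y) : Prop :=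
  ∀ q ∈ M.Q, ∀ a : A, ∃ q' ∈ M.Q, ∃ θ : BForm Y,
    (∀ s : Set Y, θ.holds s ↔ s = q') ∧ M.δ q a = [(θ.not, false, 0)]

/-- A `Safety` GNPT: there is no acceptance condition, i.e. the parity condition
accepts every infinite path. -/
def IsSafety (M : GNPT A Y) : Prop :=
  ∀ I : Set (Set Y), I.Nonempty → ParityOK M.k M.F I

end GNPT

namespace FSI

variable {Y₁ Y₂ : Type}

def part1 (s : Set (Y₁ ⊕ Y₂)) : Set Y₁ := Sum.inl ⁻¹' s
def part2 (s : Set (Y₁ ⊕ Y₂)) : Set Y₂ := Sum.inr ⁻¹' s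
def comb (a : Set Y₁) (b : Set Y₂) : Set (Y₁ ⊕ Y₂) := Sum.inl '' a ∪ Sum.inr '' b

@[simp] lemma part1_comb (a : Set Y₁) (b : Set Y₂) : part1 (comb a b) = a := by
  ext y; simp [part1, comb]

@[simp] lemma part2_comb (a : Set Y₁) (b : Set Y₂) : part2 (comb a b) = b := by
  ext y; simp [part2, comb]

def bmap {Y Z : Type} (f : Y → Z) : BForm Y → BForm Z
  | .tru => .tru
  | .fls => .fls
  | .var y => .var (f y)
  | .not g => .not (bmap f g)
  | .and g h => .and (bmap f g) (bmap f h)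
  | .or g h => .or (bmap f g) (bmap f h)

lemma bmap_holds {Y Z : Type} (f : Y → Z) (θ : BForm Y) (s : Set Z) :
    (bmap f θ).holds s ↔ θ.holds (f ⁻¹' s) := by
  induction θ <;> simp [bmap, BForm.holds, *]

lemma cpairsat_congr {ι Y Y' : Type} {I : Set ι} {f : ι → Set Y} {g : ι → Set Y'}
    {θ : BForm Y} {θ' : BForm Y'} (h : ∀ i ∈ I, θ.holds (f i) ↔ θ'.holds (g i))
    (c : Bool × ℕ) : CPairSat I f (θ, c) ↔ CPairSat I g (θ', c) := by
  have hs : {i ∈ I | θ.holds (f i)} = {i ∈ I | θ'.holds (g i)} := by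
    ext i; exact ⟨fun ⟨hi, h2⟩ => ⟨hi, (h i hi).1 h2⟩, fun ⟨hi, h2⟩ => ⟨hi, (h i hi).2 h2⟩⟩
  obtain ⟨b, n⟩ := c
  cases b <;> simp only [CPairSat] <;> rw [hs]

lemma cardLE_zero {α : Type*} {s : Set α} : CardLE s 0 ↔ s = ∅ := by
  constructor
  · rintro ⟨t, hst, hc⟩
    have : t = ∅ := Finset.card_eq_zero.1 (Nat.le_zero.1 hc)
    subst this
    simpa [Set.subset_empty_iff] using hst
  · rintro rfl; exact ⟨∅, by simp⟩

lemma unbounded_infinite {S : Set ℕ} (h : ∀ n, ∃ i, n ≤ i ∧ i ∈ S) : S.Infinite := by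
  intro hfin
  obtain ⟨m, hm⟩ := hfin.bddAbove
  obtain ⟨i, hi, hiS⟩ := h (m + 1)
  exact absurd (hm hiS) (by omega)

lemma infinite_unbounded {S : Set ℕ} (h : S.Infinite) : ∀ n, ∃ i, n ≤ i ∧ i ∈ S := by
  intro n
  by_contra hc
  push_neg at hc
  exact h (Set.Finite.subset (Set.finite_Iio n) (fun i hi => by
    by_contra h2; simp only [Set.mem_Iio, not_lt] at h2; exact hc i h2 hi))

lemma infStates_image {α β : Type*} (g : ℕ → α) (f : α → β)
    (hfin : (Set.range g).Finite) :
    {b | ∀ n, ∃ i, n ≤ i ∧ f (g i) = b} = f '' {a | ∀ n, ∃ i, n ≤ i ∧ g i = a} := by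
  ext b
  constructor
  · intro hb
    have hSinf : {i : ℕ | f (g i) = b}.Infinite := unbounded_infinite hb
    have hsub : {i : ℕ | f (g i) = b} ⊆ ⋃ a ∈ {a ∈ Set.range g | f a = b}, {i : ℕ | g i = a} := by
      intro i hi
      exact Set.mem_biUnion ⟨Set.mem_range_self i, hi⟩ rfl
    have hAfin : {a ∈ Set.range g | f a = b}.Finite := hfin.subset (Set.sep_subset _ _)
    by_contra hnb
    apply hSinf
    refine Set.Finite.subset (hAfin.biUnion fun a ha => ?_) hsub
    by_contra hinf
    exact hnb ⟨a, infinite_unbounded hinf, ha.2⟩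
  · rintro ⟨a, ha, rfl⟩ n
    obtain ⟨i, hi, rfl⟩ := ha n
    exact ⟨i, hi, rfl⟩

lemma infStates_nonempty {α : Type*} (g : ℕ → α) (hfin : (Set.range g).Finite) :
    {a | ∀ n, ∃ i, n ≤ i ∧ g i = a}.Nonempty := by
  have h := infStates_image g (fun _ => ()) hfin
  have : () ∈ {b : Unit | ∀ n, ∃ i, n ≤ i ∧ (fun _ => ()) (g i) = b} := fun n => ⟨n, le_refl n, rfl⟩
  rw [h] at this
  obtain ⟨a, ha, -⟩ := this
  exact ⟨a, ha⟩

lemma parityOK_congr {Q Q' : Type} {k : ℕ} {F : Fin k → Set Q} {F' : Fin k → Set Q'}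
    {I : Set Q} {I' : Set Q'} (h : ∀ j, (I ∩ F j).Nonempty ↔ (I' ∩ F' j).Nonempty) :
    ParityOK k F I ↔ ParityOK k F' I' := by
  constructor <;> rintro ⟨j, hne, hodd, hmin⟩
  · exact ⟨j, (h j).1 hne, hodd, fun j' hj' => hmin j' ((h j').2 hj')⟩
  · exact ⟨j, (h j).2 hne, hodd, fun j' hj' => hmin j' ((h j').1 hj')⟩

lemma infpath_mem {T : Set Node} {p : ℕ → Node} (h : IsInfPath T p) : ∀ i, p i ∈ T := by
  intro i
  cases i with
  | zero => exact h.1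
  | succ n => exact (h.2.2 n).1

end FSI

/-- **Lemma 4.** Given a `Forall` GNPT `A₁` with `n₁` states and index `k₁` and a
`Safety` GNPT `A₂` with `n₂` states and counting bound `b₂` over the same alphabet,
there is a GNPT `A` with `n₁·n₂` states, index `k₁` and counting bound `b₂` such that
`L(A) = L(A₁) ∩ L(A₂)`. -/
theorem forall_safety_intersection
    {A Y₁ Y₂ : Type} (M₁ : GNPT A Y₁) (M₂ : GNPT A Y₂)
    (h₁ : M₁.IsForall) (h₂ : M₂.IsSafety) :
    ∃ (Y : Type) (M : GNPT A Y),
      Nat.card M.Q = Nat.card M₁.Q * Nat.card M₂.Q ∧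
      M.k = M₁.k ∧ M.b = M₂.b ∧
      ∀ (T : Set Node) (V : Node → A), IsTree T →
        (M.Accepts T V ↔ M₁.Accepts T V ∧ M₂.Accepts T V) := by
  classical
  haveI := M₁.finY
  haveI := M₂.finY
  haveI : Finite ↥M₁.Q := M₁.finQ.to_subtype
  haveI : Finite ↥M₂.Q := M₂.finQ.to_subtype
  haveI : Nonempty ↥M₁.Q := ⟨⟨M₁.init, M₁.hinit⟩⟩
  haveI : Nonempty ↥M₂.Q := ⟨⟨M₂.init, M₂.hinit⟩⟩
  choose qf hqfQ θf hθf hδ₁ using h₁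
  set Qset : Set (Set (Y₁ ⊕ Y₂)) :=
    (fun p : Set Y₁ × Set Y₂ => FSI.comb p.1 p.2) '' (M₁.Q ×ˢ M₂.Q) with hQset
  have hinj : Function.Injective (fun p : Set Y₁ × Set Y₂ => FSI.comb p.1 p.2) := by
    intro p q h
    have h1 := congrArg FSI.part1 h
    have h2 := congrArg FSI.part2 h
    simp only [FSI.part1_comb, FSI.part2_comb] at h1 h2
    exact Prod.ext h1 h2
  have hcard : Nat.card Qset = Nat.card M₁.Q * Nat.card M₂.Q := by
    rw [hQset, Nat.card_image_of_injective hinj,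
      Nat.card_congr (Equiv.Set.prod M₁.Q M₂.Q), Nat.card_prod]
  have hmemQ : ∀ s ∈ Qset, FSI.part1 s ∈ M₁.Q ∧ FSI.part2 s ∈ M₂.Q := by
    rintro s ⟨⟨a, b⟩, ⟨ha, hb⟩, rfl⟩
    simpa using ⟨ha, hb⟩
  set fa : Set (Y₁ ⊕ Y₂) → A → CConstr (Y₁ ⊕ Y₂) := fun s a =>
    (if h : FSI.part1 s ∈ M₁.Q ∧ 2 ≤ Nat.card ↥M₁.Q
      then [((FSI.bmap Sum.inl (θf _ h.1 a)).not, false, 0)] else []) ++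
    (M₂.δ (FSI.part2 s) a).map (fun p => (FSI.bmap Sum.inr p.1, p.2)) with hfa
  have hn1pos : 0 < Nat.card ↥M₁.Q := Nat.card_pos
  have hn2pos : 0 < Nat.card ↥M₂.Q := Nat.card_pos
  refine ⟨Y₁ ⊕ Y₂,
    { finY := inferInstance
      b := M₂.b
      Q := Qset
      finQ := (M₁.finQ.prod M₂.finQ).image _
      δ := fa
      hb := ?_
      hsize := ?_
      init := FSI.comb M₁.init M₂.init
      hinit := ⟨(M₁.init, M₂.init), ⟨M₁.hinit, M₂.hinit⟩, rfl⟩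
      k := M₁.k
      F := fun j => {s | FSI.part1 s ∈ M₁.F j}
      Fmono := fun i j hij s hs => M₁.Fmono hij hs },
    hcard, rfl, rfl, ?_⟩
  · -- hb
    intro q hq a p hp
    simp only [hfa, List.mem_append, List.mem_map] at hp
    rcases hp with hp | ⟨p', hp', rfl⟩
    · split at hp
      · simp only [List.mem_singleton] at hp
        subst hp
        exact Nat.zero_le _
      · simp at hp
    · exact M₂.hb _ (hmemQ q hq).2 a p' hp'
  · -- hsize
    intro q hq a
    have h2 := (hmemQ q hq).2
    have hlen2 := M₂.hsize _ h2 a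
    rw [hcard]
    simp only [hfa, List.length_append, List.length_map]
    by_cases hge : 2 ≤ Nat.card ↥M₁.Q
    · rw [dif_pos ⟨(hmemQ q hq).1, hge⟩]
      simp only [List.length_singleton]
      calc 1 + (M₂.δ (FSI.part2 q) a).length ≤ 1 + Nat.log 2 (Nat.card ↥M₂.Q) := by omega
        _ = Nat.log 2 (Nat.card ↥M₂.Q * 2) := by
              rw [Nat.log_mul_base (by norm_num) (by omega)]; omega
        _ ≤ Nat.log 2 (Nat.card ↥M₁.Q * Nat.card ↥M₂.Q) := by
              apply Nat.log_mono_right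
              calc Nat.card ↥M₂.Q * 2 ≤ Nat.card ↥M₂.Q * Nat.card ↥M₁.Q :=
                    Nat.mul_le_mul_left _ hge
                _ = Nat.card ↥M₁.Q * Nat.card ↥M₂.Q := Nat.mul_comm _ _
    · rw [dif_neg (fun h => hge h.2)]
      have h1 : Nat.card ↥M₁.Q = 1 := by omega
      rw [h1, one_mul]
      simpa using hlen2
  · -- equivalence
    intro T V hT
    simp only [GNPT.Accepts, GNPT.IsRun]
    constructor
    · rintro ⟨r, ⟨hrQ, hroot, hstep⟩, hpar⟩
      constructor
      · -- M₁ accepts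
        refine ⟨fun x => FSI.part1 (r x), ⟨?_, ?_, ?_⟩, ?_⟩
        · intro x hx
          exact (hmemQ _ (hrQ x hx)).1
        · intro x hx h1
          show FSI.part1 (r x) = M₁.init
          rw [hroot x hx h1]
          exact FSI.part1_comb _ _
        · intro x hx
          have hq1 : FSI.part1 (r x) ∈ M₁.Q := (hmemQ _ (hrQ x hx)).1
          rw [hδ₁ _ hq1 (V x)]
          intro p hp
          simp only [List.mem_singleton] at hp
          subst hp
          by_cases hge : 2 ≤ Nat.card ↥M₁.Q
          · have hmem : ((FSI.bmap Sum.inl (θf _ hq1 (V x))).not, false, 0) ∈ fa (r x) (V x) := by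
              rw [hfa]
              simp only
              rw [dif_pos ⟨hq1, hge⟩]
              exact List.mem_append_left _ (List.mem_singleton_self _)
            have hcp := hstep x hx _ hmem
            exact (FSI.cpairsat_congr (fun c hc => by
              show ¬ _ ↔ ¬ _
              rw [FSI.bmap_holds]
              exact Iff.rfl) (false, 0)).1 hcp
          · show CardLE _ 0
            rw [FSI.cardLE_zero]
            rw [Set.eq_empty_iff_forall_notMem]
            rintro c ⟨hcI, hch⟩
            have h1 : Nat.card ↥M₁.Q = 1 := by omega
            haveI := (Nat.card_eq_one_iff_unique.1 h1).1
            have hcT : x ++ [c] ∈ T := hcI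
            have hmem1 : FSI.part1 (r (x ++ [c])) ∈ M₁.Q := (hmemQ _ (hrQ _ hcT)).1
            have heq : FSI.part1 (r (x ++ [c])) = qf _ hq1 (V x) :=
              congrArg Subtype.val (Subsingleton.elim
                (⟨_, hmem1⟩ : ↥M₁.Q) ⟨_, hqfQ _ hq1 (V x)⟩)
            exact hch ((hθf _ hq1 (V x) _).2 heq)
        · intro p hp
          have hfin : (Set.range fun i => r (p i)).Finite :=
            ((M₁.finQ.prod M₂.finQ).image _).subset
              (by rintro _ ⟨i, rfl⟩; exact hrQ _ (FSI.infpath_mem hp i))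
          show ParityOK M₁.k M₁.F {s | ∀ n, ∃ i, n ≤ i ∧ FSI.part1 (r (p i)) = s}
          rw [FSI.infStates_image (fun i => r (p i)) FSI.part1 hfin]
          exact (FSI.parityOK_congr fun j => Set.image_inter_nonempty_iff).2 (hpar p hp)
      · -- M₂ accepts
        refine ⟨fun x => FSI.part2 (r x), ⟨?_, ?_, ?_⟩, ?_⟩
        · intro x hx
          exact (hmemQ _ (hrQ x hx)).2
        · intro x hx h1
          show FSI.part2 (r x) = M₂.init
          rw [hroot x hx h1]
          exact FSI.part2_comb _ _
        · intro x hx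
          rintro ⟨θ₂, c₂⟩ hp
          have hmem : (FSI.bmap Sum.inr θ₂, c₂) ∈ fa (r x) (V x) := by
            rw [hfa]
            exact List.mem_append_right _ (List.mem_map.2 ⟨(θ₂, c₂), hp, rfl⟩)
          have hcp := hstep x hx _ hmem
          exact (FSI.cpairsat_congr (fun c hc => FSI.bmap_holds _ _ _) c₂).1 hcp
        · intro p hp
          have hfin : (Set.range fun i => r (p i)).Finite :=
            ((M₁.finQ.prod M₂.finQ).image _).subset
              (by rintro _ ⟨i, rfl⟩; exact hrQ _ (FSI.infpath_mem hp i))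
          have hne : {s | ∀ n, ∃ i, n ≤ i ∧ FSI.part2 (r (p i)) = s}.Nonempty := by
            rw [FSI.infStates_image (fun i => r (p i)) FSI.part2 hfin]
            exact (FSI.infStates_nonempty _ hfin).image _
          exact h₂ _ hne
    · rintro ⟨⟨r₁, ⟨h1Q, h1root, h1step⟩, h1par⟩, ⟨r₂, ⟨h2Q, h2root, h2step⟩, h2par⟩⟩
      refine ⟨fun x => FSI.comb (r₁ x) (r₂ x), ⟨?_, ?_, ?_⟩, ?_⟩
      · intro x hx
        exact ⟨(r₁ x, r₂ x), ⟨h1Q x hx, h2Q x hx⟩, rfl⟩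
      · intro x hx h1
        show FSI.comb (r₁ x) (r₂ x) = FSI.comb M₁.init M₂.init
        rw [h1root x hx h1, h2root x hx h1]
      · intro x hx
        intro p hp
        rw [hfa] at hp
        simp only [FSI.part1_comb, FSI.part2_comb, List.mem_append, List.mem_map] at hp
        rcases hp with hp | ⟨⟨θ₂, c₂⟩, hp', rfl⟩
        · by_cases hge : r₁ x ∈ M₁.Q ∧ 2 ≤ Nat.card ↥M₁.Q
          · rw [dif_pos hge] at hp
            simp only [List.mem_singleton] at hp
            subst hp
            have hs := h1step x hx
            rw [hδ₁ _ hge.1 (V x)] at hs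
            have hcp := hs _ (List.mem_singleton_self _)
            exact (FSI.cpairsat_congr (fun c hc => by
              show ¬ _ ↔ ¬ _
              rw [FSI.bmap_holds,
                show Sum.inl ⁻¹' FSI.comb (r₁ (x ++ [c])) (r₂ (x ++ [c])) = r₁ (x ++ [c])
                  from FSI.part1_comb _ _]) (false, 0)).2 hcp
          · rw [dif_neg hge] at hp
            simp at hp
        · have hcp := h2step x hx _ hp'
          exact (FSI.cpairsat_congr (fun c hc => by
            rw [FSI.bmap_holds,
              show Sum.inr ⁻¹' FSI.comb (r₁ (x ++ [c])) (r₂ (x ++ [c])) = r₂ (x ++ [c])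
                from FSI.part2_comb _ _]) c₂).2 hcp
      · intro p hp
        have hfin : (Set.range fun i => FSI.comb (r₁ (p i)) (r₂ (p i))).Finite :=
          ((M₁.finQ.prod M₂.finQ).image (fun p : Set Y₁ × Set Y₂ => FSI.comb p.1 p.2)).subset
            (by rintro _ ⟨i, rfl⟩
                exact ⟨(r₁ (p i), r₂ (p i)),
                  ⟨h1Q _ (FSI.infpath_mem hp i), h2Q _ (FSI.infpath_mem hp i)⟩, rfl⟩)
        have him := FSI.infStates_image (fun i => FSI.comb (r₁ (p i)) (r₂ (p i))) FSI.part1 hfin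
        simp only [FSI.part1_comb] at him
        have h1 := h1par p hp
        rw [him] at h1
        exact (FSI.parityOK_congr fun j => Set.image_inter_nonempty_iff).1 h1
end

section
/- Let A = ⟨{a},b,Q,δ,q₀,F⟩ be an ω-1GNPT and let A′ = ⟨{a},Q,δ′,q₀,F⟩ be the 1APW with δ′(q,a) = ⋁_{P ⊆ Q with is_mother_A(q,P)} ⋀_{q′ ∈ P} q′. Then L(A) = ∅ if and only if L(A′) = ∅. -/
/-- The full ω-tree: the infinitely branching tree (rooted at `[0]`) in which every
node has a successor for every natural number. -/
def omegaTree : Set Node := {x : Node | x ≠ [] ∧ x.head? = some 0}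
/-! ### `is_mother` and single-alphabet alternating parity word automata (1APWs) -/

/-- `is_mother_A(q, P)` for an ω-1GNPT `A`: some infinite word over `P` satisfies the
counting constraint `δ(q, a)`. -/
def GNPT.IsMother {Y : Type} (M : GNPT Unit Y) (q : Set Y) (P : Set (Set Y)) : Prop :=
  ∃ t : ℕ → Set Y, (∀ i : ℕ, t i ∈ P) ∧
    CSat (Set.univ : Set ℕ) t (M.δ q ())

/-- A run of a 1APW (given by its transition function `δ` and initial state `q₀`) on
its unique input `aaa⋯`: a `Q`-labeled tree in which the root is labeled `q₀` and the
set of labels of the children of each node satisfies the transition formula. -/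
def APWRun {Q : Type} (δ : Q → PosBool Q) (q₀ : Q)
    (Tr : Set Node) (r : Node → Q) : Prop :=
  IsTree Tr ∧
  (∀ z ∈ Tr, z.length = 1 → r z = q₀) ∧
  ∀ y ∈ Tr, ∃ S : Set Q, (δ (r y)).sats S ∧
    ∀ q ∈ S, ∃ j : ℕ, y ++ [j] ∈ Tr ∧ r (y ++ [j]) = q

/-- Nonemptiness of a 1APW with transition function `δ`, initial state `q₀` and parity
condition `F₁ ⊆ … ⊆ F_k`: there is an accepting run on the unique input `aaa⋯`. -/
def APWNonempty {Q : Type} (δ : Q → PosBool Q) (q₀ : Q) (k : ℕ)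
    (F : Fin k → Set Q) : Prop :=
  ∃ (Tr : Set Node) (r : Node → Q), APWRun δ q₀ Tr r ∧
    ∀ p : ℕ → Node, IsInfPath Tr p →
      ParityOK k F {q | ∀ n : ℕ, ∃ i : ℕ, n ≤ i ∧ r (p i) = q}

/-- The satisfaction characterization of the transition formula
`δ′(q, a) = ⋁_{P ⊆ Q, is_mother_A(q,P)} ⋀_{q′ ∈ P} q′` of the 1APW associated with an
ω-1GNPT: a set of states satisfies it iff it contains a set `P` with
`is_mother_A(q, P)`. -/
def MotherTransition {Y : Type} (M : GNPT Unit Y)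
    (δ' : {s : Set Y // s ∈ M.Q} → PosBool {s : Set Y // s ∈ M.Q}) : Prop :=
  ∀ (q : {s : Set Y // s ∈ M.Q}) (S : Set {s : Set Y // s ∈ M.Q}),
    (δ' q).sats S ↔
      ∃ P : Set (Set Y), P ⊆ M.Q ∧ M.IsMother q.val P ∧
        ∀ (s : Set Y) (hs : s ∈ M.Q), s ∈ P → (⟨s, hs⟩ : {s : Set Y // s ∈ M.Q}) ∈ S
section Aux

lemma mem_omegaTree_append {x : Node} (hx : x ∈ omegaTree) (c : ℕ) :
    x ++ [c] ∈ omegaTree := by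
  obtain ⟨hne, hhd⟩ := hx
  refine ⟨by simp, ?_⟩
  cases x with
  | nil => exact absurd rfl hne
  | cons a l => simpa using hhd

lemma omegaTree_isTree : IsTree omegaTree := by
  refine ⟨⟨fun x hx => hx.1, ?_⟩, ⟨[0], by simp [omegaTree]⟩, 0, fun x hx => hx.2⟩
  rintro x y ⟨hyT, hyh⟩ ⟨c, rfl⟩ hx
  refine ⟨hx, ?_⟩
  cases x with
  | nil => exact absurd rfl hx
  | cons a l => simpa using hyh

lemma eq_root_of_omegaTree {x : Node} (hx : x ∈ omegaTree) (h : x.length = 1) :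
    x = [0] := by
  obtain ⟨hne, hhd⟩ := hx
  cases x with
  | nil => simp at h
  | cons a l =>
    simp at h hhd
    subst hhd
    simp [h]

lemma tree_root_mem {Tr : Set Node} (h : IsTree Tr) : ∃ rt ∈ Tr, rt.length = 1 := by
  obtain ⟨⟨hne, hcl⟩, ⟨z, hz⟩, _⟩ := h
  have H : ∀ n (z : Node), z.length ≤ n → z ∈ Tr → ∃ rt ∈ Tr, rt.length = 1 := by
    intro n
    induction n with
    | zero =>
      intro z hz hzT
      exact absurd (List.length_eq_zero_iff.mp (Nat.le_zero.mp hz)) (hne z hzT)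
    | succ n ih =>
      intro z hz hzT
      have hzne : z ≠ [] := hne z hzT
      have hpos : 1 ≤ z.length := List.length_pos_iff.mpr hzne
      rcases Nat.lt_or_ge 1 z.length with h1 | h1
      · have hdl : z.dropLast ≠ [] := by
          intro hc
          have := (List.length_dropLast : z.dropLast.length = z.length - 1)
          rw [hc] at this
          simp at this
          omega
        have hmem : z.dropLast ∈ Tr := by
          refine hcl z.dropLast z hzT ⟨z.getLast hzne, ?_⟩ hdl
          exact (List.dropLast_append_getLast hzne).symm
        refine ih z.dropLast ?_ hmem
        have := (List.length_dropLast : z.dropLast.length = z.length - 1)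
        omega
      · exact ⟨z, hzT, by omega⟩
  exact H z.length z le_rfl hz

lemma tail_append_reverse (x : Node) (hx : x ≠ []) (c : ℕ) :
    (x ++ [c]).tail.reverse = c :: x.tail.reverse := by
  cases x with
  | nil => exact absurd rfl hx
  | cons a l => simp

lemma parity_transfer {Y : Type} {k : ℕ} {QS : Set (Set Y)} (F : Fin k → Set (Set Y))
    (I : Set (Set Y)) (I' : Set {s : Set Y // s ∈ QS})
    (h : ∀ q : {s : Set Y // s ∈ QS}, q ∈ I' ↔ q.val ∈ I)
    (hI : ∀ s ∈ I, s ∈ QS) :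
    ParityOK k F I ↔ ParityOK k (fun j => {s : {s : Set Y // s ∈ QS} | s.val ∈ F j}) I' := by
  have hne : ∀ j : Fin k, (I ∩ F j).Nonempty ↔
      (I' ∩ {s : {s : Set Y // s ∈ QS} | s.val ∈ F j}).Nonempty := by
    intro j
    constructor
    · rintro ⟨s, hsI, hsF⟩
      exact ⟨⟨s, hI s hsI⟩, (h _).2 hsI, hsF⟩
    · rintro ⟨q, hqI, hqF⟩
      exact ⟨q.val, (h q).1 hqI, hqF⟩
  constructor
  · rintro ⟨j, h1, h2, h3⟩
    exact ⟨j, (hne j).1 h1, h2, fun j' hj' => h3 j' ((hne j').2 hj')⟩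
  · rintro ⟨j, h1, h2, h3⟩
    exact ⟨j, (hne j).2 h1, h2, fun j' hj' => h3 j' ((hne j').1 hj')⟩

end Aux

/-- **Lemma 7.** Let `A` be an ω-1GNPT and let `A'` be the 1APW with the same states,
initial state and acceptance condition whose transition function is
`δ′(q, a) = ⋁_{P ⊆ Q, is_mother_A(q,P)} ⋀_{q′ ∈ P} q′`. Then `L(A) = ∅` iff
`L(A') = ∅`. -/
theorem omega_gnpt_to_apw
    {Y : Type} (M : GNPT Unit Y)
    (δ' : {s : Set Y // s ∈ M.Q} → PosBool {s : Set Y // s ∈ M.Q})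
    (hδ' : MotherTransition M δ') :
    (¬ M.Accepts omegaTree (fun _ => ())) ↔
      ¬ APWNonempty δ' ⟨M.init, M.hinit⟩ M.k
          (fun j => {s : {s : Set Y // s ∈ M.Q} | s.val ∈ M.F j}) := by
  classical
  have dir1 : M.Accepts omegaTree (fun _ => ()) →
      APWNonempty δ' ⟨M.init, M.hinit⟩ M.k
        (fun j => {s : {s : Set Y // s ∈ M.Q} | s.val ∈ M.F j}) := by
    rintro ⟨r, ⟨hQ, hroot, hsat⟩, hpar⟩
    set r'' : Node → {s : Set Y // s ∈ M.Q} :=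
      fun x => if h : x ∈ omegaTree then ⟨r x, hQ x h⟩ else ⟨M.init, M.hinit⟩ with hr''
    refine ⟨omegaTree, r'', ⟨omegaTree_isTree, ?_, ?_⟩, ?_⟩
    · intro z hz hz1
      have hz0 := eq_root_of_omegaTree hz hz1
      subst hz0
      simp only [hr'', dif_pos hz]
      exact Subtype.ext (hroot _ hz hz1)
    · intro y hy
      refine ⟨{q : {s : Set Y // s ∈ M.Q} | ∃ c : ℕ, r (y ++ [c]) = q.val}, ?_, ?_⟩
      · have h1 : r'' y = ⟨r y, hQ y hy⟩ := dif_pos hy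
        rw [h1, hδ']
        refine ⟨{s : Set Y | ∃ c : ℕ, r (y ++ [c]) = s}, ?_, ?_, ?_⟩
        · rintro s ⟨c, rfl⟩
          exact hQ _ (mem_omegaTree_append hy c)
        · refine ⟨fun c => r (y ++ [c]), fun c => ⟨c, rfl⟩, ?_⟩
          have hs := hsat y hy
          have hset : {c : ℕ | y ++ [c] ∈ omegaTree} = Set.univ := by
            ext c; simp [mem_omegaTree_append hy c]
          rw [hset] at hs
          exact hs
        · intro s hs hsP; exact hsP
      · rintro q ⟨c, hc⟩
        refine ⟨c, mem_omegaTree_append hy c, ?_⟩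
        have h2 : r'' (y ++ [c]) = ⟨r (y ++ [c]), hQ _ (mem_omegaTree_append hy c)⟩ :=
          dif_pos (mem_omegaTree_append hy c)
        rw [h2]
        exact Subtype.ext hc
    · intro p hp
      have hmem : ∀ i, p i ∈ omegaTree := by
        intro i
        cases i with
        | zero => exact hp.1
        | succ n => exact (hp.2.2 n).1
      have hP := hpar p hp
      refine (parity_transfer M.F _ _ ?_ ?_).1 hP
      · intro q
        simp only [Set.mem_setOf_eq]
        constructor
        · intro h n
          obtain ⟨i, hi, he⟩ := h n
          refine ⟨i, hi, ?_⟩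
          rw [← he]; simp only [hr'', dif_pos (hmem i)]
        · intro h n
          obtain ⟨i, hi, he⟩ := h n
          refine ⟨i, hi, ?_⟩
          simp only [hr'', dif_pos (hmem i)]
          exact Subtype.ext he
      · intro s hs
        obtain ⟨i, _, he⟩ := hs 0
        exact he ▸ hQ _ (hmem i)
  have dir2 : APWNonempty δ' ⟨M.init, M.hinit⟩ M.k
        (fun j => {s : {s : Set Y // s ∈ M.Q} | s.val ∈ M.F j}) →
      M.Accepts omegaTree (fun _ => ()) := by
    rintro ⟨Tr, r', ⟨hTree, hstart, hstep⟩, hacc⟩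
    obtain ⟨rt, hrt, hrt1⟩ := tree_root_mem hTree
    have key : ∀ y : Node, ∃ t : ℕ → Set Y, y ∈ Tr →
        (CSat Set.univ t (M.δ (r' y).val ()) ∧
         ∀ c : ℕ, ∃ j : ℕ, y ++ [j] ∈ Tr ∧ (r' (y ++ [j])).val = t c) := by
      intro y
      by_cases hy : y ∈ Tr
      · obtain ⟨S, hS, hch⟩ := hstep y hy
        rw [hδ'] at hS
        obtain ⟨P, hPQ, ⟨t, htP, htC⟩, hPS⟩ := hS
        refine ⟨t, fun _ => ⟨htC, ?_⟩⟩
        intro c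
        have hmemS : (⟨t c, hPQ (htP c)⟩ : {s : Set Y // s ∈ M.Q}) ∈ S :=
          hPS (t c) (hPQ (htP c)) (htP c)
        obtain ⟨j, hj1, hj2⟩ := hch _ hmemS
        exact ⟨j, hj1, by rw [hj2]⟩
      · exact ⟨fun _ => M.init, fun h => absurd h hy⟩
    choose t ht using key
    have key2 : ∀ (y : Node) (c : ℕ), ∃ j : ℕ, y ∈ Tr →
        (y ++ [j] ∈ Tr ∧ (r' (y ++ [j])).val = t y c) := by
      intro y c
      by_cases hy : y ∈ Tr
      · obtain ⟨j, hj⟩ := (ht y hy).2 c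
        exact ⟨j, fun _ => hj⟩
      · exact ⟨0, fun h => absurd h hy⟩
    choose st hst using key2
    set f : List ℕ → Node := fun l => List.foldr (fun c y => y ++ [st y c]) rt l with hf
    have hfTr : ∀ l, f l ∈ Tr := by
      intro l
      induction l with
      | nil => exact hrt
      | cons c l ih => exact (hst (f l) c ih).1
    set g : Node → Node := fun x => f x.tail.reverse with hg
    have hgTr : ∀ x, g x ∈ Tr := fun x => hfTr _
    have hgapp : ∀ (x : Node), x ≠ [] → ∀ c, g (x ++ [c]) = g x ++ [st (g x) c] := by
      intro x hx c
      simp only [hg]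
      rw [tail_append_reverse x hx c]
      simp only [hf, List.foldr_cons]
    set r : Node → Set Y := fun x => (r' (g x)).val with hr
    have hrchild : ∀ (x : Node), x ≠ [] → ∀ c, r (x ++ [c]) = t (g x) c := by
      intro x hx c
      simp only [hr]
      rw [hgapp x hx c]
      exact (hst (g x) c (hgTr x)).2
    have hg0 : g [0] = rt := rfl
    refine ⟨r, ⟨?_, ?_, ?_⟩, ?_⟩
    · intro x _
      exact (r' (g x)).2
    · intro x hx hx1
      have hx0 := eq_root_of_omegaTree hx hx1
      subst hx0
      simp only [hr, hg0]
      rw [hstart rt hrt hrt1]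
    · intro x hx
      have hxne : x ≠ [] := hx.1
      have hset : {c : ℕ | x ++ [c] ∈ omegaTree} = Set.univ := by
        ext c; simp [mem_omegaTree_append hx c]
      have hfun : (fun c => r (x ++ [c])) = t (g x) := funext (fun c => hrchild x hxne c)
      have hrx : r x = (r' (g x)).val := rfl
      rw [hset, hfun, hrx]
      exact (ht (g x) (hgTr x)).1
    · intro p hp
      have hmem : ∀ i, p i ∈ omegaTree := by
        intro i
        cases i with
        | zero => exact hp.1
        | succ n => exact (hp.2.2 n).1
      have hp' : IsInfPath Tr (fun i => g (p i)) := by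
        have hp00 : p 0 = [0] := eq_root_of_omegaTree hp.1 hp.2.1
        refine ⟨?_, ?_, ?_⟩
        · show g (p 0) ∈ Tr
          rw [hp00, hg0]; exact hrt
        · show (g (p 0)).length = 1
          rw [hp00, hg0]; exact hrt1
        · intro i
          obtain ⟨c, hc⟩ := (hp.2.2 i).2
          show g (p (i + 1)) ∈ Tr ∧ IsChild (g (p i)) (g (p (i + 1)))
          rw [hc, hgapp (p i) (hmem i).1 c]
          exact ⟨(hst (g (p i)) c (hgTr _)).1, ⟨st (g (p i)) c, rfl⟩⟩
      have hP := hacc _ hp'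
      refine (parity_transfer M.F _ _ ?_ ?_).2 hP
      · intro q
        simp only [Set.mem_setOf_eq]
        constructor
        · intro h n
          obtain ⟨i, hi, he⟩ := h n
          exact ⟨i, hi, by rw [← he]⟩
        · intro h n
          obtain ⟨i, hi, he⟩ := h n
          exact ⟨i, hi, Subtype.ext he⟩
      · intro s hs
        obtain ⟨i, _, he⟩ := hs 0
        exact he ▸ (r' (g (p i))).2
  exact not_congr ⟨dir1, dir2⟩
end
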